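/- Let r ≥ 1, let s ≥ 1 be odd, and write (2r+1)s = 2k+1. Let V_2 be the set of all (2r+1)s degree-3 vertices of DF(r, 2s), and let P be a partition of V_2 into s blocks of size 2r+1 such that each block contains exactly one degree-3 vertex of the FB(s) component and exactly two degree-3 vertices of each DF(2s) component, and no two vertices in the same block are adjacent or have a common neighbor. Let DF^2(r, 2s) be the graph obtained from DF(r, 2s) by merging each block of P into a single vertex. Then χ_la(DF^2(r, 2s)) = 3. -/

import Mathlib

namespace LocalAntimagic

variable {V W : Type*}

/-- Induced vertex label: sum of edge labels over edges incident to `v`. -/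
noncomputable def fplus (G : SimpleGraph V) (f : Sym2 V → ℕ) (v : V) : ℕ :=
  ∑ᶠ e ∈ G.incidenceSet v, f e

/-- `f` is a local antimagic labeling of `G`: a bijection from the edge set onto
`{1, …, q}` (`q` the number of edges) whose induced vertex labels distinguish
adjacent vertices. -/
def IsLocalAntimagic (G : SimpleGraph V) (f : Sym2 V → ℕ) : Prop :=
  Set.BijOn f G.edgeSet (Set.Icc 1 G.edgeSet.ncard) ∧
  ∀ ⦃u w : V⦄, G.Adj u w → fplus G f u ≠ fplus G f w

/-- The local antimagic chromatic number: the least number of distinct induced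
vertex labels over all local antimagic labelings. -/
noncomputable def chiLA (G : SimpleGraph V) : ℕ :=
  sInf {c : ℕ | ∃ f : Sym2 V → ℕ, IsLocalAntimagic G f ∧ (Set.range (fplus G f)).ncard = c}

/-- `n` disjoint copies of the path `P₃`; in copy `i`, vertex `(i,0) = uᵢ`,
`(i,1) = wᵢ`, `(i,2) = vᵢ`. -/
def nP3 (n : ℕ) : SimpleGraph (Fin n × Fin 3) :=
  SimpleGraph.fromRel (fun x y => x.1 = y.1 ∧ ((x.2 = 0 ∧ y.2 = 1) ∨ (x.2 = 1 ∧ y.2 = 2)))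

/-- Join of two graphs on disjoint vertex sets. -/
def joinG {α β : Type*} (G : SimpleGraph α) (H : SimpleGraph β) : SimpleGraph (α ⊕ β) :=
  SimpleGraph.fromRel (fun x y =>
    match x, y with
    | Sum.inl a, Sum.inl b => G.Adj a b
    | Sum.inr a, Sum.inr b => H.Adj a b
    | Sum.inl _, Sum.inr _ => True
    | Sum.inr _, Sum.inl _ => False)

/-- Disjoint union of two graphs. -/
def disjUnionG {α β : Type*} (G : SimpleGraph α) (H : SimpleGraph β) : SimpleGraph (α ⊕ β) :=
  SimpleGraph.fromRel (fun x y =>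
    match x, y with
    | Sum.inl a, Sum.inl b => G.Adj a b
    | Sum.inr a, Sum.inr b => H.Adj a b
    | _, _ => False)

/-- `m` disjoint copies of `G`. -/
def copies (m : ℕ) (G : SimpleGraph V) : SimpleGraph (Fin m × V) :=
  SimpleGraph.fromRel (fun x y => x.1 = y.1 ∧ G.Adj x.2 y.2)

/-- The fan blade graph `FB(n) = nP₃ ∨ O₁`. -/
def FB (n : ℕ) : SimpleGraph ((Fin n × Fin 3) ⊕ Fin 1) :=
  joinG (nP3 n) ⊥

/-- The graph obtained from `G` by merging vertices according to `p` (fibers of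
`p` are merged into single vertices). -/
def mergeMap (G : SimpleGraph V) (p : V → W) : SimpleGraph W :=
  SimpleGraph.fromRel (fun a b => ∃ x y, G.Adj x y ∧ p x = a ∧ p y = b)

/-- No two distinct vertices of `S` are adjacent or share a common neighbor. -/
def NoCommon (G : SimpleGraph V) (S : Set V) : Prop :=
  ∀ x ∈ S, ∀ y ∈ S, x ≠ y → ¬ G.Adj x y ∧ ∀ z, ¬ (G.Adj x z ∧ G.Adj y z)

/-- `P` is a partition of the set `S` into nonempty blocks. -/
def IsPartitionOn (S : Set V) (P : Set (Set V)) : Prop :=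
  (∀ B ∈ P, B ⊆ S) ∧ (∀ v ∈ S, ∃! B, B ∈ P ∧ v ∈ B) ∧ ∀ B ∈ P, B.Nonempty

/-- `p` identifies exactly the vertices lying in a common block of `P`,
and nothing else; `p` is surjective so the codomain is exactly the merged
vertex set. -/
def IsMergeOf (P : Set (Set V)) (p : V → W) : Prop :=
  Function.Surjective p ∧ ∀ x y : V, p x = p y ↔ (x = y ∨ ∃ B ∈ P, x ∈ B ∧ y ∈ B)


/-- The diamond fan `DF(2s)`: two copies (`c = 0,1`) of `sP₃`, plus two hub
vertices `y = Sum.inr 0` and `z = Sum.inr 1`; in copy `c`, blade `j`, position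
`0,2` are the degree-1 endpoints and `1` the middle vertex of the path. -/
def DF2 (s : ℕ) : SimpleGraph ((Fin 2 × Fin s × Fin 3) ⊕ Fin 2) :=
  SimpleGraph.fromRel (fun x y =>
    match x, y with
    | Sum.inl a, Sum.inl b =>
        a.1 = b.1 ∧ a.2.1 = b.2.1 ∧ ((a.2.2 = 0 ∧ b.2.2 = 1) ∨ (a.2.2 = 1 ∧ b.2.2 = 2))
    | Sum.inl a, Sum.inr j =>
        (j = 0 ∧ ((a.1 = 0 ∧ a.2.2 ≠ 1) ∨ (a.1 = 1 ∧ a.2.2 = 1))) ∨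
        (j = 1 ∧ ((a.1 = 1 ∧ a.2.2 ≠ 1) ∨ (a.1 = 0 ∧ a.2.2 = 1)))
    | _, _ => False)

abbrev DFVert (r s : ℕ) :=
  (Fin r × ((Fin 2 × Fin s × Fin 3) ⊕ Fin 2)) ⊕ ((Fin s × Fin 3) ⊕ Fin 1)

/-- Peanut graph `Pt(n)`: `Sum.inl (i, 0) = u_{i+1}`, `Sum.inl (i, 1) = v_{i+1}`
for `0 ≤ i ≤ 2n`, and `Sum.inr 0 = x`, `Sum.inr 1 = y`. -/
abbrev PtVert (n : ℕ) := (Fin (2*n+1) × Fin 2) ⊕ Fin 2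

def Pt (n : ℕ) : SimpleGraph (PtVert n) :=
  SimpleGraph.fromRel (fun a b =>
    match a, b with
    | Sum.inl p, Sum.inl q =>
        (p.2 = q.2 ∧ (p.1 : ℕ) + 1 = (q.1 : ℕ)) ∨
        (p.1 = q.1 ∧ (p.1 : ℕ) % 2 = 0 ∧ p.2 = 0 ∧ q.2 = 1)
    | Sum.inr j, Sum.inl p => (j = 0 ∧ (p.1 : ℕ) = 0) ∨ (j = 1 ∧ (p.1 : ℕ) = 2*n)
    | _, _ => False)

/-- Triangular bracelet `TB(n)`: `Sum.inl (j, 0) = u_{2j+1}`,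
`Sum.inl (j, 1) = v_{2j+1}` for `0 ≤ j ≤ n`, and `Sum.inr j = z_{2j}`. -/
abbrev TBVert (n : ℕ) := (Fin (n+1) × Fin 2) ⊕ Fin (n+1)

def TB (n : ℕ) : SimpleGraph (TBVert n) :=
  SimpleGraph.fromRel (fun a b =>
    match a, b with
    | Sum.inl p, Sum.inl q => p.1 = q.1 ∧ p.2 = 0 ∧ q.2 = 1
    | Sum.inr j, Sum.inl p =>
        (p.1 : ℕ) = (j : ℕ) ∨ (p.1 : ℕ) + 1 = (j : ℕ) ∨ ((j : ℕ) = 0 ∧ (p.1 : ℕ) = n)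
    | _, _ => False)

/-- Disjoint union of an indexed family of graphs. -/
def sigmaG {ι : Type*} {Vf : ι → Type*} (G : ∀ a, SimpleGraph (Vf a)) :
    SimpleGraph (Σ a, Vf a) :=
  SimpleGraph.fromRel (fun x y =>
    ∃ h : x.1 = y.1, (G y.1).Adj (cast (congrArg Vf h) x.2) y.2)

/-- `FB¹(r,s)`: `Sum.inl (i,j) = w_{i,j}`, `Sum.inr (Sum.inl i) = xᵢ`,
`Sum.inr (Sum.inr (j,0)) = uⱼ`, `Sum.inr (Sum.inr (j,1)) = vⱼ`. -/
def FB1 (r s : ℕ) : SimpleGraph ((Fin r × Fin s) ⊕ (Fin r ⊕ (Fin s × Fin 2))) :=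
  SimpleGraph.fromRel (fun a b =>
    match a, b with
    | Sum.inl w, Sum.inr (Sum.inl x) => w.1 = x
    | Sum.inl w, Sum.inr (Sum.inr uv) => w.2 = uv.1
    | Sum.inr (Sum.inl _), Sum.inr (Sum.inr _) => True
    | _, _ => False)

/-- `FB²(r,s)`: `Sum.inl (i,j,0) = u_{i,j}`, `Sum.inl (i,j,1) = v_{i,j}`,
`Sum.inr (Sum.inl i) = xᵢ`, `Sum.inr (Sum.inr j) = wⱼ`. -/
def FB2 (r s : ℕ) : SimpleGraph ((Fin r × Fin s × Fin 2) ⊕ (Fin r ⊕ Fin s)) :=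
  SimpleGraph.fromRel (fun a b =>
    match a, b with
    | Sum.inl uv, Sum.inr (Sum.inl x) => uv.1 = x
    | Sum.inl uv, Sum.inr (Sum.inr w) => uv.2.1 = w
    | Sum.inr (Sum.inl _), Sum.inr (Sum.inr _) => True
    | _, _ => False)


/-- `DF(r, 2s)`: the disjoint union of `r` copies of `DF(2s)` with one copy of `FB(s)`. -/
def DF (r s : ℕ) : SimpleGraph (DFVert r s) :=
  disjUnionG (copies r (DF2 s)) (FB s)

/-- The degree-2 vertices of `DF(r, 2s)`: the endpoint vertices of all the `P₃`'s. -/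
def DFdeg2 (r s : ℕ) : Set (DFVert r s) :=
  {v | (∃ i c j pos, pos ≠ 1 ∧ v = Sum.inl (i, Sum.inl (c, j, pos))) ∨
       (∃ j pos, pos ≠ 1 ∧ v = Sum.inr (Sum.inl (j, pos)))}

/-- The degree-3 vertices of `DF(r, 2s)`: the middle vertices of all the `P₃`'s. -/
def DFdeg3 (r s : ℕ) : Set (DFVert r s) :=
  {v | (∃ i c j, v = Sum.inl (i, Sum.inl (c, j, 1))) ∨ (∃ j, v = Sum.inr (Sum.inl (j, 1)))}

/-- The `2r+1` hub vertices (of degree `3s`) of `DF(r, 2s)`: the vertices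
`y_i, z_i` of the `DF(2s)` components and the hub `x` of the `FB(s)` component. -/
def DFhubs (r s : ℕ) : Set (DFVert r s) :=
  {v | (∃ i j, v = Sum.inl (i, Sum.inr j)) ∨ (∃ w, v = Sum.inr (Sum.inr w))}

lemma iso_image_edgeSet (G : SimpleGraph V) (H : SimpleGraph W) (e : G ≃g H) :
    Sym2.map e '' G.edgeSet = H.edgeSet := by
  ext z
  constructor
  · rintro ⟨z', hz', rfl⟩
    exact e.toHom.map_mem_edgeSet hz'
  · intro hz
    refine ⟨Sym2.map e.symm z, e.symm.toHom.map_mem_edgeSet hz, ?_⟩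
    rw [Sym2.map_map]
    have : (⇑e ∘ ⇑e.symm) = id := by ext x; simp
    rw [this, Sym2.map_id, id_eq]

lemma iso_image_incidenceSet (G : SimpleGraph V) (H : SimpleGraph W) (e : G ≃g H) (v : V) :
    Sym2.map e '' G.incidenceSet v = H.incidenceSet (e v) := by
  ext z
  constructor
  · rintro ⟨z', ⟨hz', hv⟩, rfl⟩
    exact ⟨e.toHom.map_mem_edgeSet hz', Sym2.mem_map.2 ⟨v, hv, rfl⟩⟩
  · rintro ⟨hz, hv⟩
    refine ⟨Sym2.map e.symm z, ⟨e.symm.toHom.map_mem_edgeSet hz, ?_⟩, ?_⟩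
    · exact Sym2.mem_map.2 ⟨e v, hv, e.symm_apply_apply v⟩
    · rw [Sym2.map_map]
      have : (⇑e ∘ ⇑e.symm) = id := by ext x; simp
      rw [this, Sym2.map_id, id_eq]

lemma sym2_map_injective {f : V → W} (hf : Function.Injective f) :
    Function.Injective (Sym2.map f) := Sym2.map.injective hf

lemma fplus_iso (G : SimpleGraph V) (H : SimpleGraph W) (e : G ≃g H) (f : Sym2 W → ℕ) (v : V) :
    fplus G (f ∘ Sym2.map e) v = fplus H f (e v) := by
  rw [fplus, fplus, ← iso_image_incidenceSet G H e v,
    finsum_mem_image (fun x _ y _ h => sym2_map_injective e.injective h)]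
  rfl

lemma labelSet_subset (G : SimpleGraph V) (H : SimpleGraph W) (e : G ≃g H) :
    {c : ℕ | ∃ f : Sym2 W → ℕ, IsLocalAntimagic H f ∧ (Set.range (fplus H f)).ncard = c} ⊆
    {c : ℕ | ∃ f : Sym2 V → ℕ, IsLocalAntimagic G f ∧ (Set.range (fplus G f)).ncard = c} := by
  rintro c ⟨f, ⟨hbij, hdist⟩, hc⟩
  refine ⟨f ∘ Sym2.map e, ⟨?_, ?_⟩, ?_⟩
  · have himg : Sym2.map e '' G.edgeSet = H.edgeSet := iso_image_edgeSet G H e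
    have hncard : G.edgeSet.ncard = H.edgeSet.ncard := by
      rw [← himg, Set.ncard_image_of_injective _ (sym2_map_injective e.injective)]
    rw [hncard]
    have hmt : Set.MapsTo (Sym2.map e) G.edgeSet H.edgeSet := by
      rw [← himg]; exact Set.mapsTo_image _ _
    exact hbij.comp ⟨hmt, fun x _ y _ h => sym2_map_injective e.injective h,
      by rw [← himg]; exact Set.surjOn_image _ _⟩
  · intro u w huw
    rw [fplus_iso, fplus_iso]
    exact hdist ((e.map_adj_iff).2 huw)
  · rw [← hc]
    congr 1
    have h1 : fplus G (f ∘ Sym2.map e) = (fplus H f) ∘ ⇑e := funext (fplus_iso G H e f)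
    rw [h1, Set.range_comp, e.surjective.range_eq, Set.image_univ]

lemma chiLA_eq_of_iso (G : SimpleGraph V) (H : SimpleGraph W) (e : G ≃g H) :
    chiLA G = chiLA H := by
  unfold chiLA
  congr 1
  exact le_antisymm (labelSet_subset H G e.symm) (labelSet_subset G H e)

/-- Row `i` of an `n×s` Kotzig-type array: each row a permutation of `[0,s)`,
constant column sums, for `s` odd and `n` odd `≥ 3`. -/
def Kf (s i j : ℕ) : ℕ :=
  if i = 0 then j
  else if i = 1 then (j + (s-1)/2) % s
  else if i = 2 then (if 2*j < s then s - 1 - 2*j else 2*s - 1 - 2*j)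
  else if i % 2 = 1 then j else s - 1 - j

def Xc (s i j : ℕ) : ℕ := i * s + Kf s i j
def r2f (N x : ℕ) : ℕ := (x + (N-1)/2) % N
def gmf (N x : ℕ) : ℕ := if 2*x < N then 2*x else 2*x - N

lemma mod_two_cases {N a : ℕ} (hN : 0 < N) (h : a < N + N) :
    a % N = if a < N then a else a - N := by
  split
  · exact Nat.mod_eq_of_lt ‹_›
  · rw [Nat.mod_eq_sub_mod (by omega), Nat.mod_eq_of_lt (by omega)]

lemma kf_lt {s : ℕ} (hs : 0 < s) (i : ℕ) {j : ℕ} (hj : j < s) : Kf s i j < s := by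
  unfold Kf
  have h1 : (j + (s-1)/2) % s < s := Nat.mod_lt _ hs
  split; · omega
  split; · omega
  split; · split <;> omega
  split <;> omega

lemma kf_inj {s : ℕ} (hs : Odd s) (i : ℕ) {j j' : ℕ} (hj : j < s) (hj' : j' < s)
    (h : Kf s i j = Kf s i j') : j = j' := by
  obtain ⟨b, hb⟩ := hs
  have hs0 : 0 < s := by omega
  unfold Kf at h
  have e1 := mod_two_cases hs0 (a := j + (s-1)/2) (by omega)
  have e2 := mod_two_cases hs0 (a := j' + (s-1)/2) (by omega)
  split at h; · omega
  split at h; · rw [e1, e2] at h; split at h <;> split at h <;> omega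
  split at h; · split at h <;> split at h <;> omega
  split at h <;> omega

lemma surj_of_inj {f : ℕ → ℕ} {s : ℕ} (hm : ∀ j < s, f j < s)
    (hi : ∀ j < s, ∀ j' < s, f j = f j' → j = j') : ∀ y < s, ∃ j < s, f j = y := by
  intro y hy
  have hsub : (Finset.range s).image f ⊆ Finset.range s := by
    intro a ha
    obtain ⟨j, hj, rfl⟩ := Finset.mem_image.1 ha
    exact Finset.mem_range.2 (hm j (Finset.mem_range.1 hj))
  have hcard : ((Finset.range s).image f).card = s := by
    rw [Finset.card_image_of_injOn fun a ha b hb => hi a (Finset.mem_range.1 ha) b (Finset.mem_range.1 hb), Finset.card_range]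
  have := Finset.eq_of_subset_of_card_le hsub (by rw [hcard, Finset.card_range])
  have hyy : y ∈ (Finset.range s).image f := by rw [this]; exact Finset.mem_range.2 hy
  obtain ⟨j, hj, hjy⟩ := Finset.mem_image.1 hyy
  exact ⟨j, Finset.mem_range.1 hj, hjy⟩

lemma kf_surj {s : ℕ} (hs : Odd s) (i : ℕ) : ∀ y < s, ∃ j < s, Kf s i j = y :=
  surj_of_inj (fun j hj => kf_lt (by omega) i hj) (fun j hj j' hj' => kf_inj hs i hj hj')

lemma kf_three_sum {s : ℕ} (hs : Odd s) {j : ℕ} (hj : j < s) :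
    Kf s 0 j + Kf s 1 j + Kf s 2 j = 3 * ((s-1)/2) := by
  obtain ⟨b, hb⟩ := hs
  have e1 := mod_two_cases (a := j + (s-1)/2) (N := s) (by omega) (by omega)
  have k0 : Kf s 0 j = j := by simp [Kf]
  have k1 : Kf s 1 j = (j + (s-1)/2) % s := by simp [Kf]
  have k2 : Kf s 2 j = if 2*j < s then s - 1 - 2*j else 2*s - 1 - 2*j := by simp [Kf]
  rw [k0, k1, k2, e1]
  split <;> split <;> omega

lemma kf_pair_sum {s : ℕ} {j : ℕ} (hj : j < s) (m : ℕ) :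
    ∑ i ∈ Finset.Ico 3 (3+2*m), Kf s i j = m * (s-1) := by
  induction m with
  | zero => simp
  | succ m ih =>
    have h1 : 3 + 2*(m+1) = (3+2*m) + 1 + 1 := by ring
    rw [h1, Finset.sum_Ico_succ_top (by omega), Finset.sum_Ico_succ_top (by omega), ih]
    have k1 : Kf s (3+2*m) j = j := by
      unfold Kf
      rw [if_neg (by omega), if_neg (by omega), if_neg (by omega), if_pos (by omega)]
    have k2 : Kf s (3+2*m+1) j = s - 1 - j := by
      unfold Kf
      rw [if_neg (by omega), if_neg (by omega), if_neg (by omega), if_neg (by omega)]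
    rw [k1, k2, Nat.succ_mul]
    omega

lemma kf_colsum {n s : ℕ} (hn : Odd n) (hn3 : 3 ≤ n) (hs : Odd s) {j : ℕ} (hj : j < s) :
    ∑ i ∈ Finset.range n, Kf s i j = n * ((s-1)/2) := by
  obtain ⟨a, ha⟩ := hn
  obtain ⟨b, hb⟩ := hs
  have h1 : Finset.range n = Finset.range 3 ∪ Finset.Ico 3 n := by
    rw [Finset.range_eq_Ico, ← Finset.Ico_union_Ico_eq_Ico (b := 3) (by omega) (by omega), Finset.range_eq_Ico]
  rw [h1, Finset.sum_union (by simp [Finset.disjoint_left]; omega)]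
  have h2 : ∑ i ∈ Finset.range 3, Kf s i j = 3 * ((s-1)/2) := by
    rw [Finset.sum_range_succ, Finset.sum_range_succ, Finset.sum_range_one]
    exact kf_three_sum ⟨b, hb⟩ hj
  have h3 : n = 3 + 2*(a-1) := by omega
  rw [h2, h3, kf_pair_sum hj]
  obtain ⟨c, rfl⟩ : ∃ c, a = c + 1 := ⟨a-1, by omega⟩
  have hsb : s - 1 = 2*b := by omega
  have hsb2 : (s-1)/2 = b := by omega
  rw [hsb2, hsb]
  have hcc : c + 1 - 1 = c := by omega
  rw [hcc]
  ring

lemma r2f_eq {N x : ℕ} (hN : 0 < N) (hx : x < N) :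
    r2f N x = if x + (N-1)/2 < N then x + (N-1)/2 else x + (N-1)/2 - N := by
  rw [r2f, mod_two_cases hN (by omega)]

lemma r2f_lt {N : ℕ} (hN : 0 < N) (x : ℕ) : r2f N x < N := Nat.mod_lt _ hN

lemma r2f_inj {N : ℕ} (hN : Odd N) {x x' : ℕ} (hx : x < N) (hx' : x' < N)
    (h : r2f N x = r2f N x') : x = x' := by
  obtain ⟨u, hu⟩ := hN
  rw [r2f_eq (by omega) hx, r2f_eq (by omega) hx'] at h
  split at h <;> split at h <;> omega

lemma r2f_surj {N : ℕ} (hN : Odd N) : ∀ y < N, ∃ x < N, r2f N x = y :=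
  surj_of_inj (fun x _ => r2f_lt (by obtain ⟨u,hu⟩ := hN; omega) x)
    (fun x hx x' hx' => r2f_inj hN hx hx')

lemma gmf_lt {N : ℕ} (hN : Odd N) {x : ℕ} (hx : x < N) : gmf N x < N := by
  obtain ⟨u, hu⟩ := hN; unfold gmf; split <;> omega

lemma gmf_inj {N : ℕ} (hN : Odd N) {x x' : ℕ} (hx : x < N) (hx' : x' < N)
    (h : gmf N x = gmf N x') : x = x' := by
  obtain ⟨u, hu⟩ := hN
  unfold gmf at h
  split at h <;> split at h <;> omega

lemma gmf_surj {N : ℕ} (hN : Odd N) : ∀ y < N, ∃ x < N, gmf N x = y :=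
  surj_of_inj (fun x hx => gmf_lt hN hx) (fun x hx x' hx' => gmf_inj hN hx hx')

lemma r2f_gmf_id {N : ℕ} (hN : Odd N) {x : ℕ} (hx : x < N) :
    x + r2f N x = gmf N x + (N-1)/2 := by
  obtain ⟨u, hu⟩ := hN
  rw [r2f_eq (by omega) hx]
  unfold gmf
  split <;> split <;> omega

lemma xc_lt {n s i j : ℕ} (hs : 0 < s) (hi : i < n) (hj : j < s) : Xc s i j < n * s :=
  calc i * s + Kf s i j < i * s + s := by have := kf_lt hs i hj; omega
  _ = (i+1) * s := by ring
  _ ≤ n * s := Nat.mul_le_mul_right s hi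

lemma xc_div {s i j : ℕ} (hs : 0 < s) (hj : j < s) : Xc s i j / s = i := by
  rw [Xc, Nat.mul_comm, Nat.mul_add_div hs]
  rw [Nat.div_eq_of_lt (kf_lt hs i hj), Nat.add_zero]

lemma xc_mod {s i j : ℕ} (hs : 0 < s) (hj : j < s) : Xc s i j % s = Kf s i j := by
  rw [Xc, show i * s + Kf s i j = Kf s i j + i * s by ring, Nat.add_mul_mod_self_right,
    Nat.mod_eq_of_lt (kf_lt hs i hj)]

lemma xc_inj {n s : ℕ} (hs : Odd s) {i j i' j' : ℕ} (hi : i < n) (hj : j < s)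
    (hi' : i' < n) (hj' : j' < s) (h : Xc s i j = Xc s i' j') : i = i' ∧ j = j' := by
  have hs0 : 0 < s := by obtain ⟨b,hb⟩ := hs; omega
  have d1 := xc_div (i := i) hs0 hj
  have d2 := xc_div (i := i') hs0 hj'
  have m1 := xc_mod (i := i) hs0 hj
  have m2 := xc_mod (i := i') hs0 hj'
  rw [h] at d1 m1
  refine ⟨by omega, kf_inj hs i' hj hj' ?_⟩
  have : i = i' := by omega
  rw [this] at m1
  omega

lemma xc_surj {n s : ℕ} (hs : Odd s) : ∀ x < n * s, ∃ i < n, ∃ j < s, Xc s i j = x := by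
  intro x hx
  have hs0 : 0 < s := by obtain ⟨b,hb⟩ := hs; omega
  obtain ⟨j, hj, hkj⟩ := kf_surj hs (x / s) (x % s) (Nat.mod_lt _ hs0)
  refine ⟨x / s, by rwa [Nat.div_lt_iff_lt_mul hs0], j, hj, ?_⟩
  rw [Xc, hkj, Nat.mul_comm, Nat.div_add_mod]

lemma xc_colsum {n s : ℕ} (hn : Odd n) (hn3 : 3 ≤ n) (hs : Odd s) {j : ℕ} (hj : j < s) :
    ∑ i ∈ Finset.range n, Xc s i j = n * ((n*s-1)/2) := by
  obtain ⟨a, ha⟩ := hn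
  obtain ⟨b, hb⟩ := hs
  unfold Xc
  rw [Finset.sum_add_distrib, ← Finset.sum_mul, kf_colsum ⟨a, ha⟩ hn3 ⟨b, hb⟩ hj]
  have hT : (∑ i ∈ Finset.range n, i) = n * a := by
    have h2 := Finset.sum_range_id_mul_two n
    have h3 : n * (n-1) = 2 * (n * a) := by rw [show n - 1 = 2*a by omega]; ring
    omega
  have hns : n * s = 4*(a*b) + 2*a + 2*b + 1 := by rw [ha, hb]; ring
  have h4 : (n*s-1)/2 = 2*(a*b) + a + b := by rw [hns]; omega
  have h5 : (s-1)/2 = b := by omega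
  rw [hT, h4, h5, hb]
  ring

abbrev GV (n s : ℕ) := (Fin n × Fin s × Fin 2) ⊕ (Fin n ⊕ Fin s)

def aV (n s i j t : ℕ) : ℕ :=
  if t = 0 then 1 + r2f (n*s) (Xc s i j) else 4*(n*s) - gmf (n*s) (Xc s i j)
def bV (n s i j t : ℕ) : ℕ :=
  if t = 0 then 5*(n*s) - r2f (n*s) (Xc s i j) else n*s + 1 + gmf (n*s) (Xc s i j)
def dV (n s i j : ℕ) : ℕ := 2*(n*s) + 1 + Xc s i j

def gl {n s : ℕ} : GV n s → GV n s → ℕ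
  | Sum.inl e, Sum.inr (Sum.inl _) => aV n s e.1 e.2.1 e.2.2
  | Sum.inr (Sum.inl _), Sum.inl e => aV n s e.1 e.2.1 e.2.2
  | Sum.inl e, Sum.inr (Sum.inr _) => bV n s e.1 e.2.1 e.2.2
  | Sum.inr (Sum.inr _), Sum.inl e => bV n s e.1 e.2.1 e.2.2
  | Sum.inr (Sum.inl i), Sum.inr (Sum.inr j) => dV n s i j
  | Sum.inr (Sum.inr j), Sum.inr (Sum.inl i) => dV n s i j
  | _, _ => 0

lemma gl_symm {n s : ℕ} (a b : GV n s) : gl a b = gl b a := by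
  rcases a with e | i | j <;> rcases b with e' | i' | j' <;> rfl

def glF (n s : ℕ) : Sym2 (GV n s) → ℕ := Sym2.lift ⟨gl, gl_symm⟩

def eEnum (n s : ℕ) : Fin n × Fin s × Fin 5 → Sym2 (GV n s) := fun x =>
  if x.2.2.val = 0 then s(Sum.inl (x.1, x.2.1, 0), Sum.inr (Sum.inl x.1))
  else if x.2.2.val = 1 then s(Sum.inl (x.1, x.2.1, 1), Sum.inr (Sum.inl x.1))
  else if x.2.2.val = 2 then s(Sum.inl (x.1, x.2.1, 0), Sum.inr (Sum.inr x.2.1))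
  else if x.2.2.val = 3 then s(Sum.inl (x.1, x.2.1, 1), Sum.inr (Sum.inr x.2.1))
  else s(Sum.inr (Sum.inl x.1), Sum.inr (Sum.inr x.2.1))

lemma fb2_adj {n s : ℕ} (a b : GV n s) : (FB2 n s).Adj a b ↔ a ≠ b ∧
    ((∃ (i : Fin n) (j : Fin s) (t : Fin 2),
        (a = Sum.inl (i,j,t) ∧ b = Sum.inr (Sum.inl i)) ∨
        (b = Sum.inl (i,j,t) ∧ a = Sum.inr (Sum.inl i))) ∨
     (∃ (i : Fin n) (j : Fin s) (t : Fin 2),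
        (a = Sum.inl (i,j,t) ∧ b = Sum.inr (Sum.inr j)) ∨
        (b = Sum.inl (i,j,t) ∧ a = Sum.inr (Sum.inr j))) ∨
     (∃ (i : Fin n) (j : Fin s),
        (a = Sum.inr (Sum.inl i) ∧ b = Sum.inr (Sum.inr j)) ∨
        (b = Sum.inr (Sum.inl i) ∧ a = Sum.inr (Sum.inr j)))) := by
  rw [FB2, SimpleGraph.fromRel_adj]
  apply and_congr_right
  intro hne
  constructor
  · rintro (h | h) <;>
      rcases a with ⟨ia, ja, ta⟩ | ia | ja <;> rcases b with ⟨ib, jb, tb⟩ | ib | jb <;>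
      simp_all
  · rintro (⟨i, j, t, (⟨rfl, rfl⟩ | ⟨rfl, rfl⟩)⟩ | ⟨i, j, t, (⟨rfl, rfl⟩ | ⟨rfl, rfl⟩)⟩ |
      ⟨i, j, (⟨rfl, rfl⟩ | ⟨rfl, rfl⟩)⟩) <;> simp

lemma glF_mk {n s : ℕ} (a b : GV n s) : glF n s s(a,b) = gl a b := rfl

lemma eEnum_val0 {n s : ℕ} (i : Fin n) (j : Fin s) :
    eEnum n s (i,j,0) = s(Sum.inl (i,j,0), Sum.inr (Sum.inl i)) := rfl
lemma eEnum_val1 {n s : ℕ} (i : Fin n) (j : Fin s) :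
    eEnum n s (i,j,1) = s(Sum.inl (i,j,1), Sum.inr (Sum.inl i)) := rfl
lemma eEnum_val2 {n s : ℕ} (i : Fin n) (j : Fin s) :
    eEnum n s (i,j,2) = s(Sum.inl (i,j,0), Sum.inr (Sum.inr j)) := rfl
lemma eEnum_val3 {n s : ℕ} (i : Fin n) (j : Fin s) :
    eEnum n s (i,j,3) = s(Sum.inl (i,j,1), Sum.inr (Sum.inr j)) := rfl
lemma eEnum_val4 {n s : ℕ} (i : Fin n) (j : Fin s) :
    eEnum n s (i,j,4) = s(Sum.inr (Sum.inl i), Sum.inr (Sum.inr j)) := rfl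

lemma edgeSet_eq (n s : ℕ) : (FB2 n s).edgeSet = Set.range (eEnum n s) := by
  ext z
  induction z with
  | _ a b =>
    constructor
    · intro h
      rw [SimpleGraph.mem_edgeSet, fb2_adj] at h
      obtain ⟨hne, h⟩ := h
      rcases h with ⟨i, j, t, (⟨rfl, rfl⟩ | ⟨rfl, rfl⟩)⟩ |
        ⟨i, j, t, (⟨rfl, rfl⟩ | ⟨rfl, rfl⟩)⟩ | ⟨i, j, (⟨rfl, rfl⟩ | ⟨rfl, rfl⟩)⟩
      · fin_cases t
        · exact ⟨(i, j, 0), rfl⟩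
        · exact ⟨(i, j, 1), rfl⟩
      · fin_cases t
        · exact ⟨(i, j, 0), by rw [Sym2.eq_swap]; rfl⟩
        · exact ⟨(i, j, 1), by rw [Sym2.eq_swap]; rfl⟩
      · fin_cases t
        · exact ⟨(i, j, 2), rfl⟩
        · exact ⟨(i, j, 3), rfl⟩
      · fin_cases t
        · exact ⟨(i, j, 2), by rw [Sym2.eq_swap]; rfl⟩
        · exact ⟨(i, j, 3), by rw [Sym2.eq_swap]; rfl⟩
      · exact ⟨(i, j, 4), rfl⟩
      · exact ⟨(i, j, 4), by rw [Sym2.eq_swap]; rfl⟩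
    · rintro ⟨⟨i, j, t⟩, ht⟩
      rw [← ht]
      fin_cases t
      · rw [show ((⟨0, by omega⟩ : Fin 5)) = (0 : Fin 5) from rfl, eEnum_val0,
          SimpleGraph.mem_edgeSet, fb2_adj]
        exact ⟨by simp, Or.inl ⟨i, j, 0, Or.inl ⟨rfl, rfl⟩⟩⟩
      · rw [show ((⟨1, by omega⟩ : Fin 5)) = (1 : Fin 5) from rfl, eEnum_val1,
          SimpleGraph.mem_edgeSet, fb2_adj]
        exact ⟨by simp, Or.inl ⟨i, j, 1, Or.inl ⟨rfl, rfl⟩⟩⟩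
      · rw [show ((⟨2, by omega⟩ : Fin 5)) = (2 : Fin 5) from rfl, eEnum_val2,
          SimpleGraph.mem_edgeSet, fb2_adj]
        exact ⟨by simp, Or.inr (Or.inl ⟨i, j, 0, Or.inl ⟨rfl, rfl⟩⟩)⟩
      · rw [show ((⟨3, by omega⟩ : Fin 5)) = (3 : Fin 5) from rfl, eEnum_val3,
          SimpleGraph.mem_edgeSet, fb2_adj]
        exact ⟨by simp, Or.inr (Or.inl ⟨i, j, 1, Or.inl ⟨rfl, rfl⟩⟩)⟩
      · rw [show ((⟨4, by omega⟩ : Fin 5)) = (4 : Fin 5) from rfl, eEnum_val4,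
          SimpleGraph.mem_edgeSet, fb2_adj]
        exact ⟨by simp, Or.inr (Or.inr ⟨i, j, Or.inl ⟨rfl, rfl⟩⟩)⟩

section Model
variable {n s : ℕ}

lemma glF_e0 (i : Fin n) (j : Fin s) :
    glF n s (eEnum n s (i,j,0)) = 1 + r2f (n*s) (Xc s i j) := rfl
lemma glF_e1 (i : Fin n) (j : Fin s) :
    glF n s (eEnum n s (i,j,1)) = 4*(n*s) - gmf (n*s) (Xc s i j) := rfl
lemma glF_e2 (i : Fin n) (j : Fin s) :
    glF n s (eEnum n s (i,j,2)) = 5*(n*s) - r2f (n*s) (Xc s i j) := rfl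
lemma glF_e3 (i : Fin n) (j : Fin s) :
    glF n s (eEnum n s (i,j,3)) = n*s + 1 + gmf (n*s) (Xc s i j) := rfl
lemma glF_e4 (i : Fin n) (j : Fin s) :
    glF n s (eEnum n s (i,j,4)) = 2*(n*s) + 1 + Xc s i j := rfl

def eH (n s : ℕ) (i : Fin n) : Fin s × Fin 3 → Sym2 (GV n s) := fun x =>
  if x.2.val = 0 then s(Sum.inl (i, x.1, 0), Sum.inr (Sum.inl i))
  else if x.2.val = 1 then s(Sum.inl (i, x.1, 1), Sum.inr (Sum.inl i))
  else s(Sum.inr (Sum.inl i), Sum.inr (Sum.inr x.1))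

def eM (n s : ℕ) (j : Fin s) : Fin n × Fin 3 → Sym2 (GV n s) := fun x =>
  if x.2.val = 0 then s(Sum.inl (x.1, j, 0), Sum.inr (Sum.inr j))
  else if x.2.val = 1 then s(Sum.inl (x.1, j, 1), Sum.inr (Sum.inr j))
  else s(Sum.inr (Sum.inl x.1), Sum.inr (Sum.inr j))

lemma eH_inj (i : Fin n) : Function.Injective (eH n s i) := by
  rintro ⟨j, t⟩ ⟨j', t'⟩ h
  fin_cases t <;> fin_cases t' <;> simp_all [eH, Sym2.eq_iff, Prod.ext_iff]

lemma eM_inj (j : Fin s) : Function.Injective (eM n s j) := by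
  rintro ⟨i, t⟩ ⟨i', t'⟩ h
  fin_cases t <;> fin_cases t' <;> simp_all [eM, Sym2.eq_iff, Prod.ext_iff]

lemma inc_hub (i : Fin n) :
    (FB2 n s).incidenceSet (Sum.inr (Sum.inl i)) = Set.range (eH n s i) := by
  ext z
  constructor
  · rintro ⟨hz, hv⟩
    rw [edgeSet_eq] at hz
    obtain ⟨⟨i', j', t'⟩, rfl⟩ := hz
    fin_cases t'
    · rw [show ((⟨0, by omega⟩ : Fin 5)) = (0 : Fin 5) from rfl, eEnum_val0] at hv ⊢
      rw [Sym2.mem_iff] at hv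
      rcases hv with h | h
      · exact absurd h (by simp)
      · obtain rfl : i' = i := by simpa using h.symm
        exact ⟨(j', 0), rfl⟩
    · rw [show ((⟨1, by omega⟩ : Fin 5)) = (1 : Fin 5) from rfl, eEnum_val1] at hv ⊢
      rw [Sym2.mem_iff] at hv
      rcases hv with h | h
      · exact absurd h (by simp)
      · obtain rfl : i' = i := by simpa using h.symm
        exact ⟨(j', 1), rfl⟩
    · rw [show ((⟨2, by omega⟩ : Fin 5)) = (2 : Fin 5) from rfl, eEnum_val2] at hv ⊢
      rw [Sym2.mem_iff] at hv
      rcases hv with h | h <;> exact absurd h (by simp)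
    · rw [show ((⟨3, by omega⟩ : Fin 5)) = (3 : Fin 5) from rfl, eEnum_val3] at hv ⊢
      rw [Sym2.mem_iff] at hv
      rcases hv with h | h <;> exact absurd h (by simp)
    · rw [show ((⟨4, by omega⟩ : Fin 5)) = (4 : Fin 5) from rfl, eEnum_val4] at hv ⊢
      rw [Sym2.mem_iff] at hv
      rcases hv with h | h
      · obtain rfl : i' = i := by simpa using h.symm
        exact ⟨(j', 2), rfl⟩
      · exact absurd h (by simp)
  · rintro ⟨⟨j, t⟩, rfl⟩
    fin_cases t
    · exact ⟨by rw [edgeSet_eq]; exact ⟨(i,j,0), rfl⟩, by simp [eH, Sym2.mem_iff]⟩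
    · exact ⟨by rw [edgeSet_eq]; exact ⟨(i,j,1), rfl⟩, by simp [eH, Sym2.mem_iff]⟩
    · exact ⟨by rw [edgeSet_eq]; exact ⟨(i,j,4), rfl⟩, by simp [eH, Sym2.mem_iff]⟩

lemma inc_mid (j : Fin s) :
    (FB2 n s).incidenceSet (Sum.inr (Sum.inr j)) = Set.range (eM n s j) := by
  ext z
  constructor
  · rintro ⟨hz, hv⟩
    rw [edgeSet_eq] at hz
    obtain ⟨⟨i', j', t'⟩, rfl⟩ := hz
    fin_cases t'
    · rw [show ((⟨0, by omega⟩ : Fin 5)) = (0 : Fin 5) from rfl, eEnum_val0] at hv ⊢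
      rw [Sym2.mem_iff] at hv
      rcases hv with h | h <;> exact absurd h (by simp)
    · rw [show ((⟨1, by omega⟩ : Fin 5)) = (1 : Fin 5) from rfl, eEnum_val1] at hv ⊢
      rw [Sym2.mem_iff] at hv
      rcases hv with h | h <;> exact absurd h (by simp)
    · rw [show ((⟨2, by omega⟩ : Fin 5)) = (2 : Fin 5) from rfl, eEnum_val2] at hv ⊢
      rw [Sym2.mem_iff] at hv
      rcases hv with h | h
      · exact absurd h (by simp)
      · obtain rfl : j' = j := by simpa using h.symm
        exact ⟨(i', 0), rfl⟩
    · rw [show ((⟨3, by omega⟩ : Fin 5)) = (3 : Fin 5) from rfl, eEnum_val3] at hv ⊢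
      rw [Sym2.mem_iff] at hv
      rcases hv with h | h
      · exact absurd h (by simp)
      · obtain rfl : j' = j := by simpa using h.symm
        exact ⟨(i', 1), rfl⟩
    · rw [show ((⟨4, by omega⟩ : Fin 5)) = (4 : Fin 5) from rfl, eEnum_val4] at hv ⊢
      rw [Sym2.mem_iff] at hv
      rcases hv with h | h
      · exact absurd h (by simp)
      · obtain rfl : j' = j := by simpa using h.symm
        exact ⟨(i', 2), rfl⟩
  · rintro ⟨⟨i, t⟩, rfl⟩
    fin_cases t
    · exact ⟨by rw [edgeSet_eq]; exact ⟨(i,j,2), rfl⟩, by simp [eM, Sym2.mem_iff]⟩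
    · exact ⟨by rw [edgeSet_eq]; exact ⟨(i,j,3), rfl⟩, by simp [eM, Sym2.mem_iff]⟩
    · exact ⟨by rw [edgeSet_eq]; exact ⟨(i,j,4), rfl⟩, by simp [eM, Sym2.mem_iff]⟩

lemma inc_end (i : Fin n) (j : Fin s) (t : Fin 2) :
    (FB2 n s).incidenceSet (Sum.inl (i,j,t)) =
      {s(Sum.inl (i,j,t), Sum.inr (Sum.inl i)), s(Sum.inl (i,j,t), Sum.inr (Sum.inr j))} := by
  ext z
  constructor
  · rintro ⟨hz, hv⟩
    rw [edgeSet_eq] at hz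
    obtain ⟨⟨i', j', t'⟩, rfl⟩ := hz
    fin_cases t'
    · rw [show ((⟨0, by omega⟩ : Fin 5)) = (0 : Fin 5) from rfl, eEnum_val0] at hv ⊢
      rw [Sym2.mem_iff] at hv
      rcases hv with h | h
      · obtain ⟨rfl, rfl, rfl⟩ : i' = i ∧ j' = j ∧ (0 : Fin 2) = t := by
          simpa [Prod.ext_iff] using h.symm
        exact Or.inl rfl
      · exact absurd h (by simp)
    · rw [show ((⟨1, by omega⟩ : Fin 5)) = (1 : Fin 5) from rfl, eEnum_val1] at hv ⊢
      rw [Sym2.mem_iff] at hv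
      rcases hv with h | h
      · obtain ⟨rfl, rfl, rfl⟩ : i' = i ∧ j' = j ∧ (1 : Fin 2) = t := by
          simpa [Prod.ext_iff] using h.symm
        exact Or.inl rfl
      · exact absurd h (by simp)
    · rw [show ((⟨2, by omega⟩ : Fin 5)) = (2 : Fin 5) from rfl, eEnum_val2] at hv ⊢
      rw [Sym2.mem_iff] at hv
      rcases hv with h | h
      · obtain ⟨rfl, rfl, rfl⟩ : i' = i ∧ j' = j ∧ (0 : Fin 2) = t := by
          simpa [Prod.ext_iff] using h.symm
        exact Or.inr rfl
      · exact absurd h (by simp)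
    · rw [show ((⟨3, by omega⟩ : Fin 5)) = (3 : Fin 5) from rfl, eEnum_val3] at hv ⊢
      rw [Sym2.mem_iff] at hv
      rcases hv with h | h
      · obtain ⟨rfl, rfl, rfl⟩ : i' = i ∧ j' = j ∧ (1 : Fin 2) = t := by
          simpa [Prod.ext_iff] using h.symm
        exact Or.inr rfl
      · exact absurd h (by simp)
    · rw [show ((⟨4, by omega⟩ : Fin 5)) = (4 : Fin 5) from rfl, eEnum_val4] at hv ⊢
      rw [Sym2.mem_iff] at hv
      rcases hv with h | h <;> exact absurd h (by simp)
  · rintro (rfl | rfl)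
    · refine ⟨?_, by simp [Sym2.mem_iff]⟩
      rw [edgeSet_eq]
      fin_cases t
      · exact ⟨(i,j,0), rfl⟩
      · exact ⟨(i,j,1), rfl⟩
    · refine ⟨?_, by simp [Sym2.mem_iff]⟩
      rw [edgeSet_eq]
      fin_cases t
      · exact ⟨(i,j,2), rfl⟩
      · exact ⟨(i,j,3), rfl⟩

lemma fplus_hub (hn : Odd n) (hn3 : 3 ≤ n) (hs : Odd s) (hs1 : 1 ≤ s) (i : Fin n) :
    fplus (FB2 n s) (glF n s) (Sum.inr (Sum.inl i)) =
      s * (6*(n*s) + 2 + ((n*s)-1)/2) := by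
  have hN : Odd (n*s) := hn.mul hs
  obtain ⟨u, hu⟩ := hN
  rw [fplus, inc_hub, finsum_mem_range (eH_inj i), finsum_eq_sum_of_fintype,
    Fintype.sum_prod_type]
  have step : ∀ j : Fin s, ∑ t : Fin 3, glF n s (eH n s i (j, t)) =
      6*(n*s) + 2 + ((n*s)-1)/2 := by
    intro j
    rw [Fin.sum_univ_three]
    rw [show eH n s i (j, 0) = eEnum n s (i,j,0) from rfl,
      show eH n s i (j, 1) = eEnum n s (i,j,1) from rfl,
      show eH n s i (j, 2) = eEnum n s (i,j,4) from rfl,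
      glF_e0, glF_e1, glF_e4]
    have hX := xc_lt (n := n) (show 0 < s by omega) i.isLt j.isLt
    have hr := r2f_lt (show 0 < n*s by omega) (Xc s i j)
    have hg := gmf_lt ⟨u, hu⟩ hX
    have hid := r2f_gmf_id ⟨u, hu⟩ hX
    omega
  rw [Finset.sum_congr rfl (fun j _ => step j), Finset.sum_const, Finset.card_univ,
    Fintype.card_fin, smul_eq_mul]

lemma fplus_mid (hn : Odd n) (hn3 : 3 ≤ n) (hs : Odd s) (hs1 : 1 ≤ s) (j : Fin s) :
    fplus (FB2 n s) (glF n s) (Sum.inr (Sum.inr j)) =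
      n * (8*(n*s) + 2 + ((n*s)-1)/2) := by
  have hN : Odd (n*s) := hn.mul hs
  obtain ⟨u, hu⟩ := hN
  rw [fplus, inc_mid, finsum_mem_range (eM_inj j), finsum_eq_sum_of_fintype,
    Fintype.sum_prod_type]
  have step : ∀ i : Fin n, (∑ t : Fin 3, glF n s (eM n s j (i, t))) + ((n*s)-1)/2 =
      8*(n*s) + 2 + 2 * Xc s i j := by
    intro i
    rw [Fin.sum_univ_three]
    rw [show eM n s j (i, 0) = eEnum n s (i,j,2) from rfl,
      show eM n s j (i, 1) = eEnum n s (i,j,3) from rfl,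
      show eM n s j (i, 2) = eEnum n s (i,j,4) from rfl,
      glF_e2, glF_e3, glF_e4]
    have hX := xc_lt (n := n) (show 0 < s by omega) i.isLt j.isLt
    have hr := r2f_lt (show 0 < n*s by omega) (Xc s i j)
    have hg := gmf_lt ⟨u, hu⟩ hX
    have hid := r2f_gmf_id ⟨u, hu⟩ hX
    omega
  have hbig : (∑ i : Fin n, ∑ t : Fin 3, glF n s (eM n s j (i, t))) + n * (((n*s)-1)/2) =
      n * (8*(n*s) + 2) + 2 * (n * (((n*s)-1)/2)) := by
    have h1 : (∑ i : Fin n, ∑ t : Fin 3, glF n s (eM n s j (i, t))) + n * (((n*s)-1)/2) =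
        ∑ i : Fin n, ((∑ t : Fin 3, glF n s (eM n s j (i, t))) + ((n*s)-1)/2) := by
      rw [Finset.sum_add_distrib, Finset.sum_const, Finset.card_univ, Fintype.card_fin,
        smul_eq_mul]
    rw [h1, Finset.sum_congr rfl (fun i _ => step i), Finset.sum_add_distrib,
      Finset.sum_const, Finset.card_univ, Fintype.card_fin, smul_eq_mul, ← Finset.mul_sum]
    have h2 : (∑ i : Fin n, Xc s (i : ℕ) (j : ℕ)) = ∑ i ∈ Finset.range n, Xc s i j := by
      rw [Finset.sum_range fun i => Xc s i j]
    rw [h2, xc_colsum hn hn3 hs j.isLt]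
  have hdist : n * (8*(n*s) + 2 + ((n*s)-1)/2) = n*(8*(n*s)+2) + n*(((n*s)-1)/2) := by ring
  omega

lemma fplus_end (hn : Odd n) (hn3 : 3 ≤ n) (hs : Odd s) (hs1 : 1 ≤ s)
    (i : Fin n) (j : Fin s) (t : Fin 2) :
    fplus (FB2 n s) (glF n s) (Sum.inl (i,j,t)) = 5*(n*s) + 1 := by
  have hN : Odd (n*s) := hn.mul hs
  obtain ⟨u, hu⟩ := hN
  rw [fplus, inc_end, finsum_mem_pair (by simp)]
  have hX := xc_lt (n := n) (show 0 < s by omega) i.isLt j.isLt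
  have hr := r2f_lt (show 0 < n*s by omega) (Xc s i j)
  have hg := gmf_lt ⟨u, hu⟩ hX
  have e1 : glF n s s(Sum.inl (i,j,t), Sum.inr (Sum.inl i)) = aV n s i j t := rfl
  have e2 : glF n s s(Sum.inl (i,j,t), Sum.inr (Sum.inr j)) = bV n s i j t := rfl
  rw [e1, e2]
  fin_cases t <;> simp only [aV, bV] <;> norm_num <;> omega

lemma bijOn_glF (hn : Odd n) (hn3 : 3 ≤ n) (hs : Odd s) (hs1 : 1 ≤ s) :
    Set.BijOn (glF n s) ((FB2 n s).edgeSet) (Set.Icc 1 (5*(n*s))) := by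
  have hN : Odd (n*s) := hn.mul hs
  obtain ⟨u, hu⟩ := hN
  have hs0 : 0 < s := by omega
  have hN0 : 0 < n*s := by omega
  refine ⟨?_, ?_, ?_⟩
  · intro z hz
    rw [edgeSet_eq] at hz
    obtain ⟨⟨i, j, t⟩, rfl⟩ := hz
    have hX := xc_lt (n := n) hs0 i.isLt j.isLt
    have hr := r2f_lt hN0 (Xc s i j)
    have hg := gmf_lt ⟨u, hu⟩ hX
    fin_cases t <;>
      simp only [show ((⟨0, by omega⟩ : Fin 5)) = (0 : Fin 5) from rfl,
        show ((⟨1, by omega⟩ : Fin 5)) = (1 : Fin 5) from rfl,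
        show ((⟨2, by omega⟩ : Fin 5)) = (2 : Fin 5) from rfl,
        show ((⟨3, by omega⟩ : Fin 5)) = (3 : Fin 5) from rfl,
        show ((⟨4, by omega⟩ : Fin 5)) = (4 : Fin 5) from rfl,
        glF_e0, glF_e1, glF_e2, glF_e3, glF_e4] <;>
      exact ⟨by omega, by omega⟩
  · intro z hz z' hz' h
    rw [edgeSet_eq] at hz hz'
    obtain ⟨⟨i, j, t⟩, rfl⟩ := hz
    obtain ⟨⟨i', j', t'⟩, rfl⟩ := hz'
    have hX := xc_lt (n := n) hs0 i.isLt j.isLt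
    have hX' := xc_lt (n := n) hs0 i'.isLt j'.isLt
    have hr := r2f_lt hN0 (Xc s i j)
    have hr' := r2f_lt hN0 (Xc s i' j')
    have hg := gmf_lt ⟨u, hu⟩ hX
    have hg' := gmf_lt ⟨u, hu⟩ hX'
    fin_cases t <;> fin_cases t' <;>
      simp only [show ((⟨0, by omega⟩ : Fin 5)) = (0 : Fin 5) from rfl,
        show ((⟨1, by omega⟩ : Fin 5)) = (1 : Fin 5) from rfl,
        show ((⟨2, by omega⟩ : Fin 5)) = (2 : Fin 5) from rfl,
        show ((⟨3, by omega⟩ : Fin 5)) = (3 : Fin 5) from rfl,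
        show ((⟨4, by omega⟩ : Fin 5)) = (4 : Fin 5) from rfl,
        glF_e0, glF_e1, glF_e2, glF_e3, glF_e4] at h ⊢ <;>
      first
        | (exfalso; omega)
        | (have hxx : Xc s (i : ℕ) (j : ℕ) = Xc s (i' : ℕ) (j' : ℕ) := by
             first
               | exact r2f_inj ⟨u, hu⟩ hX hX' (by omega)
               | exact gmf_inj ⟨u, hu⟩ hX hX' (by omega)
               | omega
           obtain ⟨hi, hj⟩ := xc_inj hs i.isLt j.isLt i'.isLt j'.isLt hxx
           obtain rfl : i = i' := Fin.ext hi
           obtain rfl : j = j' := Fin.ext hj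
           rfl)
  · intro m hm
    obtain ⟨hm1, hm2⟩ := hm
    by_cases c1 : m ≤ n*s
    · obtain ⟨x, hx, hr2⟩ := r2f_surj ⟨u, hu⟩ (m-1) (by omega)
      obtain ⟨i, hi, j, hj, hxc⟩ := xc_surj (n := n) hs x hx
      refine ⟨eEnum n s (⟨i, hi⟩, ⟨j, hj⟩, 0), ?_, ?_⟩
      · rw [edgeSet_eq]; exact ⟨_, rfl⟩
      · rw [glF_e0]; show 1 + r2f (n*s) (Xc s i j) = m; rw [hxc, hr2]; omega
    · by_cases c2 : m ≤ 2*(n*s)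
      · obtain ⟨x, hx, hg2⟩ := gmf_surj ⟨u, hu⟩ (m-(n*s)-1) (by omega)
        obtain ⟨i, hi, j, hj, hxc⟩ := xc_surj (n := n) hs x hx
        refine ⟨eEnum n s (⟨i, hi⟩, ⟨j, hj⟩, 3), ?_, ?_⟩
        · rw [edgeSet_eq]; exact ⟨_, rfl⟩
        · rw [glF_e3]; show n*s + 1 + gmf (n*s) (Xc s i j) = m; rw [hxc, hg2]; omega
      · by_cases c3 : m ≤ 3*(n*s)
        · obtain ⟨i, hi, j, hj, hxc⟩ := xc_surj (n := n) hs (m-2*(n*s)-1) (by omega)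
          refine ⟨eEnum n s (⟨i, hi⟩, ⟨j, hj⟩, 4), ?_, ?_⟩
          · rw [edgeSet_eq]; exact ⟨_, rfl⟩
          · rw [glF_e4]; show 2*(n*s) + 1 + Xc s i j = m; rw [hxc]; omega
        · by_cases c4 : m ≤ 4*(n*s)
          · obtain ⟨x, hx, hg2⟩ := gmf_surj ⟨u, hu⟩ (4*(n*s)-m) (by omega)
            obtain ⟨i, hi, j, hj, hxc⟩ := xc_surj (n := n) hs x hx
            refine ⟨eEnum n s (⟨i, hi⟩, ⟨j, hj⟩, 1), ?_, ?_⟩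
            · rw [edgeSet_eq]; exact ⟨_, rfl⟩
            · rw [glF_e1]; show 4*(n*s) - gmf (n*s) (Xc s i j) = m; rw [hxc, hg2]; omega
          · obtain ⟨x, hx, hr2⟩ := r2f_surj ⟨u, hu⟩ (5*(n*s)-m) (by omega)
            obtain ⟨i, hi, j, hj, hxc⟩ := xc_surj (n := n) hs x hx
            refine ⟨eEnum n s (⟨i, hi⟩, ⟨j, hj⟩, 2), ?_, ?_⟩
            · rw [edgeSet_eq]; exact ⟨_, rfl⟩
            · rw [glF_e2]; show 5*(n*s) - r2f (n*s) (Xc s i j) = m; rw [hxc, hr2]; omega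

lemma vals_BC_ne (hn : Odd n) (hn3 : 3 ≤ n) (hs : Odd s) (hs1 : 1 ≤ s) :
    s * (6*(n*s) + 2 + ((n*s)-1)/2) ≠ n * (8*(n*s) + 2 + ((n*s)-1)/2) := by
  have hN : Odd (n*s) := hn.mul hs
  obtain ⟨u, hu⟩ := hN
  intro hBC
  set N := n*s with hNdef
  have h2 : s * (13*N+3) = n * (17*N+3) := by
    have e1 : s * (13*N+3) = 2 * (s * (6*N + 2 + (N-1)/2)) := by
      have : 2 * (6*N + 2 + (N-1)/2) = 13*N+3 := by omega
      calc s * (13*N+3) = s * (2 * (6*N + 2 + (N-1)/2)) := by rw [this]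
      _ = 2 * (s * (6*N + 2 + (N-1)/2)) := by ring
    have e2 : n * (17*N+3) = 2 * (n * (8*N + 2 + (N-1)/2)) := by
      have : 2 * (8*N + 2 + (N-1)/2) = 17*N+3 := by omega
      calc n * (17*N+3) = n * (2 * (8*N + 2 + (N-1)/2)) := by rw [this]
      _ = 2 * (n * (8*N + 2 + (N-1)/2)) := by ring
    rw [e1, e2, hBC]
  have k1 : 13*(N*s) + 3*s = 17*(N*n) + 3*n := by
    have : s * (13*N+3) = 13*(N*s) + 3*s := by ring
    have h3 : n * (17*N+3) = 17*(N*n) + 3*n := by ring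
    omega
  have hP3s : 3*s ≤ N := by
    calc 3*s ≤ n*s := Nat.mul_le_mul_right s hn3
    _ = N := rfl
  rcases le_or_gt s n with hsn | hns
  · have k2 : s*(13*N+3) ≤ n*(13*N+3) := Nat.mul_le_mul_right _ hsn
    have k3 : n*(13*N+3) < n*(17*N+3) := by
      have h5 : 13*N+3 < 17*N+3 := by omega
      exact Nat.mul_lt_mul_of_le_of_lt (le_refl n) h5 (by omega)
    omega
  · rcases lt_trichotomy (13*s) (17*n) with h13 | h13 | h13
    · have k2 : 13*(N*s) + N ≤ 17*(N*n) := by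
        calc 13*(N*s) + N = N*(13*s+1) := by ring
        _ ≤ N*(17*n) := Nat.mul_le_mul_left _ (by omega)
        _ = 17*(N*n) := by ring
      omega
    · have k4 : 13*(N*s) = 17*(N*n) := by
        calc 13*(N*s) = N*(13*s) := by ring
        _ = N*(17*n) := by rw [h13]
        _ = 17*(N*n) := by ring
      omega
    · have k2 : 17*(N*n) + N ≤ 13*(N*s) := by
        calc 17*(N*n) + N = N*(17*n+1) := by ring
        _ ≤ N*(13*s) := Nat.mul_le_mul_left _ (by omega)
        _ = 13*(N*s) := by ring
      omega

lemma vals_AB_lt (hn3 : 3 ≤ n) (hs1 : 1 ≤ s) :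
    5*(n*s) + 1 < s * (6*(n*s) + 2 + ((n*s)-1)/2) := by
  have h1 : 6*(n*s) + 2 + ((n*s)-1)/2 ≤ s * (6*(n*s) + 2 + ((n*s)-1)/2) :=
    Nat.le_mul_of_pos_left _ (by omega)
  have hN1 : 1 ≤ n*s := by exact Nat.one_le_iff_ne_zero.2 (by positivity)
  omega

lemma vals_AC_lt (hn3 : 3 ≤ n) (hs1 : 1 ≤ s) :
    5*(n*s) + 1 < n * (8*(n*s) + 2 + ((n*s)-1)/2) := by
  have h1 : 8*(n*s) + 2 + ((n*s)-1)/2 ≤ n * (8*(n*s) + 2 + ((n*s)-1)/2) :=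
    Nat.le_mul_of_pos_left _ (by omega)
  have hN1 : 1 ≤ n*s := by exact Nat.one_le_iff_ne_zero.2 (by positivity)
  omega

lemma ncard_edgeSet (hn : Odd n) (hn3 : 3 ≤ n) (hs : Odd s) (hs1 : 1 ≤ s) :
    ((FB2 n s).edgeSet).ncard = 5*(n*s) := by
  have hbij := bijOn_glF hn hn3 hs hs1
  have h1 : ((FB2 n s).edgeSet).ncard = (glF n s '' (FB2 n s).edgeSet).ncard :=
    (Set.ncard_image_of_injOn hbij.injOn).symm
  rw [h1, hbij.image_eq, ← Finset.coe_Icc, Set.ncard_coe_finset, Nat.card_Icc]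
  omega

lemma isLA_glF (hn : Odd n) (hn3 : 3 ≤ n) (hs : Odd s) (hs1 : 1 ≤ s) :
    IsLocalAntimagic (FB2 n s) (glF n s) := by
  constructor
  · rw [ncard_edgeSet hn hn3 hs hs1]
    exact bijOn_glF hn hn3 hs hs1
  · intro a b hadj
    rw [fb2_adj] at hadj
    obtain ⟨hne, h⟩ := hadj
    rcases h with ⟨i, j, t, (⟨rfl, rfl⟩ | ⟨rfl, rfl⟩)⟩ |
      ⟨i, j, t, (⟨rfl, rfl⟩ | ⟨rfl, rfl⟩)⟩ | ⟨i, j, (⟨rfl, rfl⟩ | ⟨rfl, rfl⟩)⟩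
    · rw [fplus_end hn hn3 hs hs1, fplus_hub hn hn3 hs hs1]
      exact Nat.ne_of_lt (vals_AB_lt hn3 hs1)
    · rw [fplus_end hn hn3 hs hs1, fplus_hub hn hn3 hs hs1]
      exact Nat.ne_of_gt (vals_AB_lt hn3 hs1)
    · rw [fplus_end hn hn3 hs hs1, fplus_mid hn hn3 hs hs1]
      exact Nat.ne_of_lt (vals_AC_lt hn3 hs1)
    · rw [fplus_end hn hn3 hs hs1, fplus_mid hn hn3 hs hs1]
      exact Nat.ne_of_gt (vals_AC_lt hn3 hs1)
    · rw [fplus_hub hn hn3 hs hs1, fplus_mid hn hn3 hs hs1]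
      exact vals_BC_ne hn hn3 hs hs1
    · rw [fplus_hub hn hn3 hs hs1, fplus_mid hn hn3 hs hs1]
      exact fun hc => vals_BC_ne hn hn3 hs hs1 hc.symm

lemma range_fplus_glF (hn : Odd n) (hn3 : 3 ≤ n) (hs : Odd s) (hs1 : 1 ≤ s) :
    Set.range (fplus (FB2 n s) (glF n s)) =
      {5*(n*s) + 1, s * (6*(n*s) + 2 + ((n*s)-1)/2), n * (8*(n*s) + 2 + ((n*s)-1)/2)} := by
  ext y
  constructor
  · rintro ⟨v, rfl⟩
    rcases v with ⟨i, j, t⟩ | i | j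
    · rw [fplus_end hn hn3 hs hs1]; exact Or.inl rfl
    · rw [fplus_hub hn hn3 hs hs1]; exact Or.inr (Or.inl rfl)
    · rw [fplus_mid hn hn3 hs hs1]; exact Or.inr (Or.inr rfl)
  · rintro (rfl | rfl | rfl)
    · exact ⟨Sum.inl (⟨0, by omega⟩, ⟨0, by omega⟩, 0), fplus_end hn hn3 hs hs1 _ _ _⟩
    · exact ⟨Sum.inr (Sum.inl ⟨0, by omega⟩), fplus_hub hn hn3 hs hs1 _⟩
    · exact ⟨Sum.inr (Sum.inr ⟨0, by omega⟩), fplus_mid hn hn3 hs hs1 _⟩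

lemma chiLA_FB2 (n s : ℕ) (hn : Odd n) (hn3 : 3 ≤ n) (hs : Odd s) (hs1 : 1 ≤ s) :
    chiLA (FB2 n s) = 3 := by
  have hmem3 : 3 ∈ {c : ℕ | ∃ f : Sym2 (GV n s) → ℕ,
      IsLocalAntimagic (FB2 n s) f ∧ (Set.range (fplus (FB2 n s) f)).ncard = c} := by
    refine ⟨glF n s, isLA_glF hn hn3 hs hs1, ?_⟩
    rw [range_fplus_glF hn hn3 hs hs1]
    refine Set.ncard_eq_three.2 ⟨_, _, _, ?_, ?_, ?_, rfl⟩
    · exact Nat.ne_of_lt (vals_AB_lt hn3 hs1)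
    · exact Nat.ne_of_lt (vals_AC_lt hn3 hs1)
    · exact vals_BC_ne hn hn3 hs hs1
  have hlower : ∀ c ∈ {c : ℕ | ∃ f : Sym2 (GV n s) → ℕ,
      IsLocalAntimagic (FB2 n s) f ∧ (Set.range (fplus (FB2 n s) f)).ncard = c}, 3 ≤ c := by
    rintro c ⟨f, hLA, rfl⟩
    set v1 : GV n s := Sum.inl (⟨0, by omega⟩, ⟨0, by omega⟩, 0) with hv1
    set v2 : GV n s := Sum.inr (Sum.inl ⟨0, by omega⟩) with hv2
    set v3 : GV n s := Sum.inr (Sum.inr ⟨0, by omega⟩) with hv3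
    have h12 : (FB2 n s).Adj v1 v2 := by
      rw [fb2_adj]
      exact ⟨by simp [hv1, hv2], Or.inl ⟨_, _, _, Or.inl ⟨rfl, rfl⟩⟩⟩
    have h13 : (FB2 n s).Adj v1 v3 := by
      rw [fb2_adj]
      exact ⟨by simp [hv1, hv3], Or.inr (Or.inl ⟨_, _, _, Or.inl ⟨rfl, rfl⟩⟩)⟩
    have h23 : (FB2 n s).Adj v2 v3 := by
      rw [fb2_adj]
      exact ⟨by simp [hv2, hv3], Or.inr (Or.inr ⟨_, _, Or.inl ⟨rfl, rfl⟩⟩)⟩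
    have hsub : {fplus (FB2 n s) f v1, fplus (FB2 n s) f v2, fplus (FB2 n s) f v3} ⊆
        Set.range (fplus (FB2 n s) f) := by
      rintro y (rfl | rfl | rfl) <;> exact ⟨_, rfl⟩
    have h3 : ({fplus (FB2 n s) f v1, fplus (FB2 n s) f v2, fplus (FB2 n s) f v3} :
        Set ℕ).ncard = 3 :=
      Set.ncard_eq_three.2 ⟨_, _, _, hLA.2 h12, hLA.2 h13, hLA.2 h23, rfl⟩
    calc 3 = ({fplus (FB2 n s) f v1, fplus (FB2 n s) f v2, fplus (FB2 n s) f v3} :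
        Set ℕ).ncard := h3.symm
    _ ≤ (Set.range (fplus (FB2 n s) f)).ncard :=
      Set.ncard_le_ncard hsub (Set.finite_range _)
  exact le_antisymm (Nat.sInf_le hmem3) (le_csInf ⟨3, hmem3⟩ hlower)

end Model

section IsoPart
variable {r s : ℕ}

lemma dfA1 (i : Fin r) (c : Fin 2) (j : Fin s) (pos : Fin 3) (h : pos = 0 ∨ pos = 2) :
    (DF r s).Adj (Sum.inl (i, Sum.inl (c, j, pos))) (Sum.inl (i, Sum.inl (c, j, 1))) := by
  rw [DF, disjUnionG, SimpleGraph.fromRel_adj]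
  constructor
  · rcases h with rfl | rfl <;> simp
  · left
    show (copies r (DF2 s)).Adj _ _
    rw [copies, SimpleGraph.fromRel_adj]
    refine ⟨by rcases h with rfl | rfl <;> simp, Or.inl ⟨rfl, ?_⟩⟩
    show (DF2 s).Adj _ _
    rw [DF2, SimpleGraph.fromRel_adj]
    rcases h with rfl | rfl
    · exact ⟨by simp, Or.inl ⟨rfl, rfl, Or.inl ⟨rfl, rfl⟩⟩⟩
    · exact ⟨by simp, Or.inr ⟨rfl, rfl, Or.inr ⟨rfl, rfl⟩⟩⟩

lemma dfA2 (i : Fin r) (c : Fin 2) (j : Fin s) :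
    (DF r s).Adj (Sum.inl (i, Sum.inl (c, j, 1))) (Sum.inl (i, Sum.inr (if c = 0 then 1 else 0))) := by
  rw [DF, disjUnionG, SimpleGraph.fromRel_adj]
  refine ⟨by simp, Or.inl ?_⟩
  show (copies r (DF2 s)).Adj _ _
  rw [copies, SimpleGraph.fromRel_adj]
  refine ⟨by simp, Or.inl ⟨rfl, ?_⟩⟩
  show (DF2 s).Adj _ _
  rw [DF2, SimpleGraph.fromRel_adj]
  refine ⟨by simp, Or.inl ?_⟩
  fin_cases c
  · exact Or.inr ⟨by norm_num, Or.inr ⟨rfl, rfl⟩⟩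
  · exact Or.inl ⟨by norm_num, Or.inr ⟨rfl, rfl⟩⟩

lemma dfA3 (i : Fin r) (c : Fin 2) (j : Fin s) (pos : Fin 3) (h : pos ≠ 1) :
    (DF r s).Adj (Sum.inl (i, Sum.inl (c, j, pos))) (Sum.inl (i, Sum.inr c)) := by
  rw [DF, disjUnionG, SimpleGraph.fromRel_adj]
  refine ⟨by simp, Or.inl ?_⟩
  show (copies r (DF2 s)).Adj _ _
  rw [copies, SimpleGraph.fromRel_adj]
  refine ⟨by simp, Or.inl ⟨rfl, ?_⟩⟩
  show (DF2 s).Adj _ _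
  rw [DF2, SimpleGraph.fromRel_adj]
  refine ⟨by simp, Or.inl ?_⟩
  fin_cases c
  · exact Or.inl ⟨rfl, Or.inl ⟨rfl, h⟩⟩
  · exact Or.inr ⟨rfl, Or.inl ⟨rfl, h⟩⟩

lemma dfA4 (j : Fin s) (pos : Fin 3) (h : pos = 0 ∨ pos = 2) :
    (DF r s).Adj (Sum.inr (Sum.inl (j, pos))) (Sum.inr (Sum.inl (j, 1))) := by
  rw [DF, disjUnionG, SimpleGraph.fromRel_adj]
  constructor
  · rcases h with rfl | rfl <;> simp
  · right
    show (FB s).Adj _ _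
    rw [FB, joinG, SimpleGraph.fromRel_adj]
    constructor
    · rcases h with rfl | rfl <;> simp
    · right
      show (nP3 s).Adj _ _
      rw [nP3, SimpleGraph.fromRel_adj]
      rcases h with rfl | rfl
      · exact ⟨by simp, Or.inl ⟨rfl, Or.inl ⟨rfl, rfl⟩⟩⟩
      · exact ⟨by simp, Or.inr ⟨rfl, Or.inr ⟨rfl, rfl⟩⟩⟩

lemma dfA5 (j : Fin s) (pos : Fin 3) (w : Fin 1) :
    (DF r s).Adj (Sum.inr (Sum.inl (j, pos))) (Sum.inr (Sum.inr w)) := by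
  rw [DF, disjUnionG, SimpleGraph.fromRel_adj]
  refine ⟨by simp, Or.inl ?_⟩
  show (FB s).Adj _ _
  rw [FB, joinG, SimpleGraph.fromRel_adj]
  exact ⟨by simp, Or.inl trivial⟩

def psiMap (r s : ℕ) (β : Fin r → Fin 2 → Fin s → Fin s) : DFVert r s → GV (2*r+1) s
  | Sum.inl (i, Sum.inl (c, j, pos)) =>
      if pos = 1 then Sum.inr (Sum.inr (β i c j))
      else Sum.inl (⟨2*i.val + c.val, by have := i.isLt; have := c.isLt; omega⟩, β i c j,
        if pos = 0 then 0 else 1)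
  | Sum.inl (i, Sum.inr hh) =>
      Sum.inr (Sum.inl ⟨2*i.val + hh.val, by have := i.isLt; have := hh.isLt; omega⟩)
  | Sum.inr (Sum.inl (j, pos)) =>
      if pos = 1 then Sum.inr (Sum.inr j)
      else Sum.inl (⟨2*r, by omega⟩, j, if pos = 0 then 0 else 1)
  | Sum.inr (Sum.inr _) => Sum.inr (Sum.inl ⟨2*r, by omega⟩)

variable {β : Fin r → Fin 2 → Fin s → Fin s}

lemma psi_mid (i : Fin r) (c : Fin 2) (j : Fin s) :
    psiMap r s β (Sum.inl (i, Sum.inl (c, j, 1))) = Sum.inr (Sum.inr (β i c j)) := rfl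
lemma psi_e0 (i : Fin r) (c : Fin 2) (j : Fin s) :
    psiMap r s β (Sum.inl (i, Sum.inl (c, j, 0))) =
      Sum.inl (⟨2*i.val + c.val, by have := i.isLt; have := c.isLt; omega⟩, β i c j, 0) := rfl
lemma psi_e2 (i : Fin r) (c : Fin 2) (j : Fin s) :
    psiMap r s β (Sum.inl (i, Sum.inl (c, j, 2))) =
      Sum.inl (⟨2*i.val + c.val, by have := i.isLt; have := c.isLt; omega⟩, β i c j, 1) := rfl
lemma psi_hub (i : Fin r) (hh : Fin 2) :
    psiMap r s β (Sum.inl (i, Sum.inr hh)) =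
      Sum.inr (Sum.inl ⟨2*i.val + hh.val, by have := i.isLt; have := hh.isLt; omega⟩) := rfl
lemma psi_fbmid (j : Fin s) :
    psiMap r s β (Sum.inr (Sum.inl (j, 1))) = Sum.inr (Sum.inr j) := rfl
lemma psi_fb0 (j : Fin s) :
    psiMap r s β (Sum.inr (Sum.inl (j, 0))) = Sum.inl (⟨2*r, by omega⟩, j, 0) := rfl
lemma psi_fb2 (j : Fin s) :
    psiMap r s β (Sum.inr (Sum.inl (j, 2))) = Sum.inl (⟨2*r, by omega⟩, j, 1) := rfl
lemma psi_x (w : Fin 1) :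
    psiMap r s β (Sum.inr (Sum.inr w)) = Sum.inr (Sum.inl ⟨2*r, by omega⟩) := rfl


lemma mdfA (i : Fin r) (c : Fin 2) (j : Fin s) :
    (FB2 (2*r+1) s).Adj (psiMap r s β (Sum.inl (i, Sum.inl (c, j, 0))))
      (psiMap r s β (Sum.inl (i, Sum.inl (c, j, 1)))) := by
  rw [psi_e0, psi_mid, fb2_adj]
  exact ⟨by simp, Or.inr (Or.inl ⟨_, _, _, Or.inl ⟨rfl, rfl⟩⟩)⟩

lemma mdfB (i : Fin r) (c : Fin 2) (j : Fin s) :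
    (FB2 (2*r+1) s).Adj (psiMap r s β (Sum.inl (i, Sum.inl (c, j, 2))))
      (psiMap r s β (Sum.inl (i, Sum.inl (c, j, 1)))) := by
  rw [psi_e2, psi_mid, fb2_adj]
  exact ⟨by simp, Or.inr (Or.inl ⟨_, _, _, Or.inl ⟨rfl, rfl⟩⟩)⟩

lemma mhubEnd0 (i : Fin r) (c : Fin 2) (j : Fin s) :
    (FB2 (2*r+1) s).Adj (psiMap r s β (Sum.inl (i, Sum.inl (c, j, 0))))
      (psiMap r s β (Sum.inl (i, Sum.inr c))) := by
  rw [psi_e0, psi_hub, fb2_adj]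
  exact ⟨by simp, Or.inl ⟨_, _, _, Or.inl ⟨rfl, rfl⟩⟩⟩

lemma mhubEnd2 (i : Fin r) (c : Fin 2) (j : Fin s) :
    (FB2 (2*r+1) s).Adj (psiMap r s β (Sum.inl (i, Sum.inl (c, j, 2))))
      (psiMap r s β (Sum.inl (i, Sum.inr c))) := by
  rw [psi_e2, psi_hub, fb2_adj]
  exact ⟨by simp, Or.inl ⟨_, _, _, Or.inl ⟨rfl, rfl⟩⟩⟩

lemma mhubMid (i : Fin r) (c : Fin 2) (j : Fin s) (hh : Fin 2) :
    (FB2 (2*r+1) s).Adj (psiMap r s β (Sum.inl (i, Sum.inl (c, j, 1))))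
      (psiMap r s β (Sum.inl (i, Sum.inr hh))) := by
  rw [psi_mid, psi_hub, fb2_adj]
  exact ⟨by simp, Or.inr (Or.inr ⟨_, _, Or.inr ⟨rfl, rfl⟩⟩)⟩

lemma mfbA (j : Fin s) :
    (FB2 (2*r+1) s).Adj (psiMap r s β (Sum.inr (Sum.inl (j, 0))))
      (psiMap r s β (Sum.inr (Sum.inl (j, 1)))) := by
  rw [psi_fb0, psi_fbmid, fb2_adj]
  exact ⟨by simp, Or.inr (Or.inl ⟨_, _, _, Or.inl ⟨rfl, rfl⟩⟩)⟩

lemma mfbB (j : Fin s) :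
    (FB2 (2*r+1) s).Adj (psiMap r s β (Sum.inr (Sum.inl (j, 2))))
      (psiMap r s β (Sum.inr (Sum.inl (j, 1)))) := by
  rw [psi_fb2, psi_fbmid, fb2_adj]
  exact ⟨by simp, Or.inr (Or.inl ⟨_, _, _, Or.inl ⟨rfl, rfl⟩⟩)⟩

lemma mfbX0 (j : Fin s) (w : Fin 1) :
    (FB2 (2*r+1) s).Adj (psiMap r s β (Sum.inr (Sum.inl (j, 0))))
      (psiMap r s β (Sum.inr (Sum.inr w))) := by
  rw [psi_fb0, psi_x, fb2_adj]
  exact ⟨by simp, Or.inl ⟨_, _, _, Or.inl ⟨rfl, rfl⟩⟩⟩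

lemma mfbX1 (j : Fin s) (w : Fin 1) :
    (FB2 (2*r+1) s).Adj (psiMap r s β (Sum.inr (Sum.inl (j, 1))))
      (psiMap r s β (Sum.inr (Sum.inr w))) := by
  rw [psi_fbmid, psi_x, fb2_adj]
  exact ⟨by simp, Or.inr (Or.inr ⟨_, _, Or.inr ⟨rfl, rfl⟩⟩)⟩

lemma mfbX2 (j : Fin s) (w : Fin 1) :
    (FB2 (2*r+1) s).Adj (psiMap r s β (Sum.inr (Sum.inl (j, 2))))
      (psiMap r s β (Sum.inr (Sum.inr w))) := by
  rw [psi_fb2, psi_x, fb2_adj]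
  exact ⟨by simp, Or.inl ⟨_, _, _, Or.inl ⟨rfl, rfl⟩⟩⟩

lemma mfbX (j : Fin s) (pos : Fin 3) (w : Fin 1) :
    (FB2 (2*r+1) s).Adj (psiMap r s β (Sum.inr (Sum.inl (j, pos))))
      (psiMap r s β (Sum.inr (Sum.inr w))) := by
  fin_cases pos
  · exact mfbX0 _ _
  · exact mfbX1 _ _
  · exact mfbX2 _ _

set_option maxHeartbeats 2000000 in
lemma psi_adj (x y : DFVert r s) (h : (DF r s).Adj x y) :
    (FB2 (2*r+1) s).Adj (psiMap r s β x) (psiMap r s β y) := by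
  rcases x with ⟨i, ⟨c, j, pos⟩ | hh⟩ | ⟨j, pos⟩ | w <;>
    rcases y with ⟨i', ⟨c', j', pos'⟩ | hh'⟩ | ⟨j', pos'⟩ | w' <;>
    simp [DF, disjUnionG, copies, DF2, FB, joinG, nP3, SimpleGraph.fromRel_adj] at h
  -- path-path
  · obtain ⟨-, (⟨-, h⟩ | ⟨-, h⟩)⟩ := h <;>
      rcases h with ⟨hi, -, h⟩ | ⟨hi, -, h⟩ <;> subst hi <;>
      rcases h with ⟨hc, hj, (⟨h1, h2⟩ | ⟨h1, h2⟩)⟩ | ⟨hc, hj, (⟨h1, h2⟩ | ⟨h1, h2⟩)⟩ <;>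
      subst hc <;> subst hj <;> subst h1 <;> subst h2 <;>
      first
        | exact mdfA _ _ _
        | exact (mdfA _ _ _).symm
        | exact mdfB _ _ _
        | exact (mdfB _ _ _).symm
  -- path-hub
  · rcases h with (⟨hi, hc⟩ | ⟨hi, hc⟩) | (⟨hi, hc⟩ | ⟨hi, hc⟩) <;> subst hi <;>
      rcases hc with ⟨rfl, (⟨rfl, hp⟩ | ⟨rfl, hp⟩)⟩ | ⟨rfl, (⟨rfl, hp⟩ | ⟨rfl, hp⟩)⟩ <;>
      first
        | (subst hp; exact mhubMid _ _ _ _)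
        | (fin_cases pos <;>
            first
              | exact absurd rfl hp
              | exact mhubEnd0 _ _ _
              | exact mhubEnd2 _ _ _)
  -- hub-path
  · apply SimpleGraph.Adj.symm
    rcases h with (⟨hi, hc⟩ | ⟨hi, hc⟩) | (⟨hi, hc⟩ | ⟨hi, hc⟩) <;> subst hi <;>
      rcases hc with ⟨rfl, (⟨rfl, hp⟩ | ⟨rfl, hp⟩)⟩ | ⟨rfl, (⟨rfl, hp⟩ | ⟨rfl, hp⟩)⟩ <;>
      first
        | (subst hp; exact mhubMid _ _ _ _)
        | (fin_cases pos' <;>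
            first
              | exact absurd rfl hp
              | exact mhubEnd0 _ _ _
              | exact mhubEnd2 _ _ _)
  -- fbpath-fbpath
  · obtain ⟨-, h⟩ := h
    rcases h with ⟨-, (⟨-, h⟩ | ⟨-, h⟩)⟩ | ⟨-, (⟨-, h⟩ | ⟨-, h⟩)⟩ <;>
      rcases h with ⟨hj, (⟨h1, h2⟩ | ⟨h1, h2⟩)⟩ | ⟨hj, (⟨h1, h2⟩ | ⟨h1, h2⟩)⟩ <;>
      subst hj <;> subst h1 <;> subst h2 <;>
      first
        | exact mfbA _
        | exact (mfbA _).symm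
        | exact mfbB _
        | exact (mfbB _).symm
  -- fbpath-x
  · exact mfbX _ _ _
  -- x-fbpath
  · exact (mfbX _ _ _).symm
lemma merge_iso (r s : ℕ) (hr : 1 ≤ r) (hs1 : 1 ≤ s)
    (P : Set (Set (DFVert r s)))
    (hpart : IsPartitionOn (DFdeg3 r s) P)
    (hBFB : ∀ B ∈ P, (B ∩ {v | ∃ w, v = Sum.inr w}).ncard = 1)
    (hnc : ∀ B ∈ P, NoCommon (DF r s) B)
    {W : Type*} (p : DFVert r s → W) (hp : IsMergeOf P p) :
    Nonempty ((mergeMap (DF r s) p) ≃g FB2 (2*r+1) s) := by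
  classical
  obtain ⟨H1, H2, -⟩ := hpart
  obtain ⟨psurj, piff⟩ := hp
  -- unique FB middle in each block
  have hFBex : ∀ B ∈ P, ∃ j : Fin s, Sum.inr (Sum.inl (j, 1)) ∈ B := by
    intro B hB
    obtain ⟨a, ha⟩ := Set.ncard_eq_one.1 (hBFB B hB)
    have haB : a ∈ B ∩ {v | ∃ w, v = Sum.inr w} := by rw [ha]; rfl
    obtain ⟨haB1, w, hw⟩ := haB
    rcases H1 B hB haB1 with ⟨i, c, j, hv⟩ | ⟨j, hv⟩
    · rw [hv] at hw; cases hw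
    · exact ⟨j, hv ▸ haB1⟩
  have hFBuniq : ∀ B ∈ P, ∀ j j' : Fin s,
      Sum.inr (Sum.inl (j, 1)) ∈ B → Sum.inr (Sum.inl (j', 1)) ∈ B → j = j' := by
    intro B hB j j' hj hj'
    obtain ⟨a, ha⟩ := Set.ncard_eq_one.1 (hBFB B hB)
    have h1 : (Sum.inr (Sum.inl (j, 1)) : DFVert r s) ∈ B ∩ {v | ∃ w, v = Sum.inr w} :=
      ⟨hj, _, rfl⟩
    have h2 : (Sum.inr (Sum.inl (j', 1)) : DFVert r s) ∈ B ∩ {v | ∃ w, v = Sum.inr w} :=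
      ⟨hj', _, rfl⟩
    rw [ha] at h1 h2
    have := h1.trans h2.symm
    simpa using this
  have hUB : ∀ v ∈ DFdeg3 r s, ∀ B B', B ∈ P → B' ∈ P → v ∈ B → v ∈ B' → B = B' := by
    intro v hv B B' hB hB' hvB hvB'
    exact ((H2 v hv).unique ⟨hB, hvB⟩ ⟨hB', hvB'⟩)
  have midMem : ∀ (i : Fin r) (c : Fin 2) (j : Fin s),
      (Sum.inl (i, Sum.inl (c, j, 1)) : DFVert r s) ∈ DFdeg3 r s :=
    fun i c j => Or.inl ⟨i, c, j, rfl⟩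
  have fbMem : ∀ j : Fin s, (Sum.inr (Sum.inl (j, 1)) : DFVert r s) ∈ DFdeg3 r s :=
    fun j => Or.inr ⟨j, rfl⟩
  have hbeta : ∀ (i : Fin r) (c : Fin 2) (j : Fin s), ∃ (j' : Fin s) (B : Set (DFVert r s)),
      B ∈ P ∧ Sum.inl (i, Sum.inl (c, j, 1)) ∈ B ∧ Sum.inr (Sum.inl (j', 1)) ∈ B := by
    intro i c j
    obtain ⟨B, ⟨hBP, hvB⟩, -⟩ := H2 _ (midMem i c j)
    obtain ⟨j', hj'⟩ := hFBex B hBP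
    exact ⟨j', B, hBP, hvB, hj'⟩
  choose β Bf hBfP hBfD hBfF using hbeta
  -- p facts
  have pm1 : ∀ (i : Fin r) (c : Fin 2) (j : Fin s),
      p (Sum.inl (i, Sum.inl (c, j, 1))) = p (Sum.inr (Sum.inl (β i c j, 1))) :=
    fun i c j => (piff _ _).2 (Or.inr ⟨Bf i c j, hBfP i c j, hBfD i c j, hBfF i c j⟩)
  have pFBinj : ∀ j j' : Fin s,
      p (Sum.inr (Sum.inl (j, 1)) : DFVert r s) = p (Sum.inr (Sum.inl (j', 1))) → j = j' := by
    intro j j' h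
    rcases (piff _ _).1 h with heq | ⟨B, hB, h1, h2⟩
    · simpa using heq
    · exact hFBuniq B hB _ _ h1 h2
  have pm2 : ∀ (i : Fin r) (c : Fin 2) (j : Fin s) (i' : Fin r) (c' : Fin 2) (j' : Fin s),
      β i c j = β i' c' j' →
      p (Sum.inl (i, Sum.inl (c, j, 1))) = p (Sum.inl (i', Sum.inl (c', j', 1))) := by
    intro i c j i' c' j' h
    rw [pm1, pm1, h]
  have pm2' : ∀ (i : Fin r) (c : Fin 2) (j : Fin s) (i' : Fin r) (c' : Fin 2) (j' : Fin s),
      p (Sum.inl (i, Sum.inl (c, j, 1))) = p (Sum.inl (i', Sum.inl (c', j', 1))) →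
      β i c j = β i' c' j' := by
    intro i c j i' c' j' h
    apply pFBinj
    rw [← pm1, ← pm1, h]
  have pm3 : ∀ (i : Fin r) (c : Fin 2) (j : Fin s) (j0 : Fin s),
      p (Sum.inl (i, Sum.inl (c, j, 1))) = p (Sum.inr (Sum.inl (j0, 1))) ↔ β i c j = j0 := by
    intro i c j j0
    constructor
    · intro h
      apply pFBinj
      rw [← pm1, h]
    · intro h
      rw [pm1, h]
  have notdeg3 : ∀ x : DFVert r s, x ∉ DFdeg3 r s →
      (∀ y, p x = p y → x = y) ∧ (∀ y, p y = p x → y = x) := by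
    intro x hx
    constructor
    · intro y h
      rcases (piff _ _).1 h with heq | ⟨B, hB, h1, h2⟩
      · exact heq
      · exact absurd (H1 B hB h1) hx
    · intro y h
      rcases (piff _ _).1 h with heq | ⟨B, hB, h1, h2⟩
      · exact heq
      · exact absurd (H1 B hB h2) hx
  have βinj : ∀ (i : Fin r) (c : Fin 2), Function.Injective (β i c) := by
    intro i c j1 j2 heq
    by_contra hne
    have hpe := pm2 i c j1 i c j2 heq
    rcases (piff _ _).1 hpe with hxy | ⟨B, hB, h1, h2⟩
    · apply hne; simpa using hxy
    · have hxyne : (Sum.inl (i, Sum.inl (c, j1, 1)) : DFVert r s) ≠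
        Sum.inl (i, Sum.inl (c, j2, 1)) := by simp [hne]
      obtain ⟨-, hcom⟩ := hnc B hB _ h1 _ h2 hxyne
      exact hcom (Sum.inl (i, Sum.inr (if c = 0 then 1 else 0))) ⟨dfA2 i c j1, dfA2 i c j2⟩
  have βsurj : ∀ (i : Fin r) (c : Fin 2), Function.Surjective (β i c) :=
    fun i c => Finite.injective_iff_surjective.1 (βinj i c)
  -- compatibility of psi with p
  have dir1 : ∀ x y : DFVert r s, p x = p y → psiMap r s β x = psiMap r s β y := by
    intro x y h
    rcases (piff x y).1 h with rfl | ⟨B, hB, hxB, hyB⟩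
    · rfl
    · rcases H1 B hB hxB with ⟨i, c, j, rfl⟩ | ⟨j, rfl⟩ <;>
        rcases H1 B hB hyB with ⟨i', c', j', rfl⟩ | ⟨j', rfl⟩
      · have e1 : B = Bf i c j := hUB _ (midMem i c j) B _ hB (hBfP i c j) hxB (hBfD i c j)
        have e2 : B = Bf i' c' j' :=
          hUB _ (midMem i' c' j') B _ hB (hBfP i' c' j') hyB (hBfD i' c' j')
        have hb : β i c j = β i' c' j' := by
          apply hFBuniq B hB
          · rw [e1]; exact hBfF i c j
          · rw [e2]; exact hBfF i' c' j'
        rw [psi_mid, psi_mid, hb]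
      · have e1 : B = Bf i c j := hUB _ (midMem i c j) B _ hB (hBfP i c j) hxB (hBfD i c j)
        have hb : β i c j = j' := by
          apply hFBuniq B hB
          · rw [e1]; exact hBfF i c j
          · exact hyB
        rw [psi_mid, psi_fbmid, hb]
      · have e2 : B = Bf i' c' j' :=
          hUB _ (midMem i' c' j') B _ hB (hBfP i' c' j') hyB (hBfD i' c' j')
        have hb : β i' c' j' = j := by
          apply hFBuniq B hB
          · rw [e2]; exact hBfF i' c' j'
          · exact hxB
        rw [psi_mid, psi_fbmid, hb]
      · rw [hFBuniq B hB _ _ hxB hyB]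
  have dir2 : ∀ x y : DFVert r s, psiMap r s β x = psiMap r s β y → p x = p y := by
    intro x y hψ
    rcases x with ⟨i, ⟨c, j, pos⟩ | hh⟩ | ⟨j, pos⟩ | w <;>
      rcases y with ⟨i', ⟨c', j', pos'⟩ | hh'⟩ | ⟨j', pos'⟩ | w'
    · fin_cases pos <;> fin_cases pos' <;> simp [psiMap] at hψ
      · obtain ⟨h1, h2⟩ := hψ
        obtain rfl : i = i' := by
          have := i.isLt; have := i'.isLt; have := c.isLt; have := c'.isLt
          exact Fin.ext (by omega)
        obtain rfl : c = c' := by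
          have := c.isLt; have := c'.isLt
          exact Fin.ext (by omega)
        obtain rfl : j = j' := βinj i c h2
        rfl
      · exact pm2 _ _ _ _ _ _ hψ
      · obtain ⟨h1, h2⟩ := hψ
        obtain rfl : i = i' := by
          have := i.isLt; have := i'.isLt; have := c.isLt; have := c'.isLt
          exact Fin.ext (by omega)
        obtain rfl : c = c' := by
          have := c.isLt; have := c'.isLt
          exact Fin.ext (by omega)
        obtain rfl : j = j' := βinj i c h2
        rfl
    · fin_cases pos <;> simp [psiMap] at hψ
    · fin_cases pos <;> fin_cases pos' <;> simp [psiMap] at hψ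
      · exfalso; have := i.isLt; have := c.isLt; omega
      · exact (pm3 _ _ _ _).2 hψ
      · exfalso; have := i.isLt; have := c.isLt; omega
    · fin_cases pos <;> simp [psiMap] at hψ
    · fin_cases pos' <;> simp [psiMap] at hψ
    · simp [psiMap] at hψ
      obtain rfl : i = i' := by
        have := i.isLt; have := i'.isLt; have := hh.isLt; have := hh'.isLt
        exact Fin.ext (by omega)
      obtain rfl : hh = hh' := by
        have := hh.isLt; have := hh'.isLt
        exact Fin.ext (by omega)
      rfl
    · fin_cases pos' <;> simp [psiMap] at hψ
    · simp [psiMap] at hψ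
      exfalso; have := i.isLt; have := hh.isLt; omega
    · fin_cases pos <;> fin_cases pos' <;> simp [psiMap] at hψ
      · exfalso; have := i'.isLt; have := c'.isLt; omega
      · exact ((pm3 _ _ _ _).2 hψ.symm).symm
      · exfalso; have := i'.isLt; have := c'.isLt; omega
    · fin_cases pos <;> simp [psiMap] at hψ
    · fin_cases pos <;> fin_cases pos' <;> simp [psiMap] at hψ
      · obtain rfl : j = j' := hψ
        rfl
      · obtain rfl : j = j' := hψ
        rfl
      · obtain rfl : j = j' := hψ
        rfl
    · fin_cases pos <;> simp [psiMap] at hψ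
    · fin_cases pos' <;> simp [psiMap] at hψ
    · simp [psiMap] at hψ
      exfalso; have := i'.isLt; have := hh'.isLt; omega
    · fin_cases pos' <;> simp [psiMap] at hψ
    · obtain rfl : w = w' := Subsingleton.elim _ _
      rfl
  have hψsurj : Function.Surjective (psiMap r s β) := by
    rintro (⟨h, j, t⟩ | hcd | j)
    · by_cases hval : h.val = 2*r
      · have hfin : (⟨2*r, by omega⟩ : Fin (2*r+1)) = h := Fin.ext hval.symm
        fin_cases t
        · refine ⟨Sum.inr (Sum.inl (j, 0)), ?_⟩
          rw [psi_fb0]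
          exact congrArg (fun z => Sum.inl (z, j, 0)) hfin
        · refine ⟨Sum.inr (Sum.inl (j, 2)), ?_⟩
          rw [psi_fb2]
          exact congrArg (fun z => Sum.inl (z, j, 1)) hfin
      · have hlt : h.val < 2*r := by have := h.isLt; omega
        set i : Fin r := ⟨h.val / 2, by omega⟩ with hi
        set c : Fin 2 := ⟨h.val % 2, by omega⟩ with hc
        have hfin : (⟨2*i.val + c.val, by have := i.isLt; have := c.isLt; omega⟩ :
            Fin (2*r+1)) = h := Fin.ext (show 2*(h.val/2) + h.val%2 = h.val by omega)
        obtain ⟨j'', hj''⟩ := βsurj i c j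
        fin_cases t
        · refine ⟨Sum.inl (i, Sum.inl (c, j'', 0)), ?_⟩
          rw [psi_e0, hj'']
          exact congrArg (fun z => Sum.inl (z, j, 0)) hfin
        · refine ⟨Sum.inl (i, Sum.inl (c, j'', 2)), ?_⟩
          rw [psi_e2, hj'']
          exact congrArg (fun z => Sum.inl (z, j, 1)) hfin
    · by_cases hval : hcd.val = 2*r
      · have hfin : (⟨2*r, by omega⟩ : Fin (2*r+1)) = hcd := Fin.ext hval.symm
        refine ⟨Sum.inr (Sum.inr 0), ?_⟩
        rw [psi_x]
        exact congrArg (fun z => Sum.inr (Sum.inl z)) hfin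
      · have hlt : hcd.val < 2*r := by have := hcd.isLt; omega
        set i : Fin r := ⟨hcd.val / 2, by omega⟩ with hi
        set c : Fin 2 := ⟨hcd.val % 2, by omega⟩ with hc
        have hfin : (⟨2*i.val + c.val, by have := i.isLt; have := c.isLt; omega⟩ :
            Fin (2*r+1)) = hcd := Fin.ext (show 2*(hcd.val/2) + hcd.val%2 = hcd.val by omega)
        refine ⟨Sum.inl (i, Sum.inr c), ?_⟩
        rw [psi_hub]
        exact congrArg (fun z => Sum.inr (Sum.inl z)) hfin
    · exact ⟨Sum.inr (Sum.inl (j, 1)), psi_fbmid j⟩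
  have hback : ∀ x y : DFVert r s, (FB2 (2*r+1) s).Adj (psiMap r s β x) (psiMap r s β y) →
      ∃ x' y', (DF r s).Adj x' y' ∧ p x' = p x ∧ p y' = p y := by
    intro x y h
    rcases x with ⟨i, ⟨c, j, pos⟩ | hh⟩ | ⟨j, pos⟩ | w <;>
      rcases y with ⟨i', ⟨c', j', pos'⟩ | hh'⟩ | ⟨j', pos'⟩ | w'
    · -- E E
      fin_cases pos <;> fin_cases pos' <;> rw [fb2_adj] at h <;> simp [psiMap] at h
      · exact ⟨Sum.inl (i, Sum.inl (c, j, 0)), Sum.inl (i, Sum.inl (c, j, 1)),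
          dfA1 i c j 0 (Or.inl rfl), rfl,
          by first | exact pm2 _ _ _ _ _ _ h | exact pm2 _ _ _ _ _ _ h.symm⟩
      · exact ⟨Sum.inl (i', Sum.inl (c', j', 1)), Sum.inl (i', Sum.inl (c', j', 0)),
          (dfA1 i' c' j' 0 (Or.inl rfl)).symm,
          by first | exact pm2 _ _ _ _ _ _ h | exact pm2 _ _ _ _ _ _ h.symm, rfl⟩
      · exact ⟨Sum.inl (i', Sum.inl (c', j', 1)), Sum.inl (i', Sum.inl (c', j', 2)),
          (dfA1 i' c' j' 2 (Or.inr rfl)).symm,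
          by first | exact pm2 _ _ _ _ _ _ h | exact pm2 _ _ _ _ _ _ h.symm, rfl⟩
      · exact ⟨Sum.inl (i, Sum.inl (c, j, 2)), Sum.inl (i, Sum.inl (c, j, 1)),
          dfA1 i c j 2 (Or.inr rfl), rfl,
          by first | exact pm2 _ _ _ _ _ _ h | exact pm2 _ _ _ _ _ _ h.symm⟩
    · -- E Hub
      fin_cases pos <;> rw [fb2_adj] at h <;> simp [psiMap] at h
      · obtain rfl : i = i' := by
          have := i.isLt; have := i'.isLt; have := c.isLt; have := hh'.isLt
          exact Fin.ext (by omega)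
        obtain rfl : c = hh' := by
          have := c.isLt; have := hh'.isLt
          exact Fin.ext (by omega)
        exact ⟨Sum.inl (i, Sum.inl (c, j, 0)), Sum.inl (i, Sum.inr c),
          dfA3 i c j 0 (by decide), rfl, rfl⟩
      · fin_cases hh'
        · obtain ⟨j'', hj''⟩ := βsurj i' 1 (β i c j)
          exact ⟨Sum.inl (i', Sum.inl (1, j'', 1)), Sum.inl (i', Sum.inr 0),
            dfA2 i' 1 j'', pm2 _ _ _ _ _ _ hj'', rfl⟩
        · obtain ⟨j'', hj''⟩ := βsurj i' 0 (β i c j)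
          exact ⟨Sum.inl (i', Sum.inl (0, j'', 1)), Sum.inl (i', Sum.inr 1),
            dfA2 i' 0 j'', pm2 _ _ _ _ _ _ hj'', rfl⟩
      · obtain rfl : i = i' := by
          have := i.isLt; have := i'.isLt; have := c.isLt; have := hh'.isLt
          exact Fin.ext (by omega)
        obtain rfl : c = hh' := by
          have := c.isLt; have := hh'.isLt
          exact Fin.ext (by omega)
        exact ⟨Sum.inl (i, Sum.inl (c, j, 2)), Sum.inl (i, Sum.inr c),
          dfA3 i c j 2 (by decide), rfl, rfl⟩
    · -- E F
      fin_cases pos <;> fin_cases pos' <;> rw [fb2_adj] at h <;> simp [psiMap] at h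
      · exact ⟨Sum.inl (i, Sum.inl (c, j, 0)), Sum.inl (i, Sum.inl (c, j, 1)),
          dfA1 i c j 0 (Or.inl rfl), rfl,
          by first | exact (pm3 _ _ _ _).2 h | exact (pm3 _ _ _ _).2 h.symm⟩
      · exact ⟨Sum.inr (Sum.inl (j', 1)), Sum.inr (Sum.inl (j', 0)),
          (dfA4 j' 0 (Or.inl rfl)).symm,
          by first | exact ((pm3 _ _ _ _).2 h).symm | exact ((pm3 _ _ _ _).2 h.symm).symm, rfl⟩
      · exact ⟨Sum.inr (Sum.inl (j', 1)), Sum.inr (Sum.inl (j', 2)),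
          (dfA4 j' 2 (Or.inr rfl)).symm,
          by first | exact ((pm3 _ _ _ _).2 h).symm | exact ((pm3 _ _ _ _).2 h.symm).symm, rfl⟩
      · exact ⟨Sum.inl (i, Sum.inl (c, j, 2)), Sum.inl (i, Sum.inl (c, j, 1)),
          dfA1 i c j 2 (Or.inr rfl), rfl,
          by first | exact (pm3 _ _ _ _).2 h | exact (pm3 _ _ _ _).2 h.symm⟩
    · -- E X
      fin_cases pos <;> rw [fb2_adj] at h <;> simp [psiMap] at h
      · exfalso; have := i.isLt; have := c.isLt; omega
      · exact ⟨Sum.inr (Sum.inl (β i c j, 1)), Sum.inr (Sum.inr w'),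
          dfA5 _ 1 w', (pm1 i c j).symm, rfl⟩
      · exfalso; have := i.isLt; have := c.isLt; omega
    · -- Hub E
      fin_cases pos' <;> rw [fb2_adj] at h <;> simp [psiMap] at h
      · obtain rfl : i' = i := by
          have := i.isLt; have := i'.isLt; have := c'.isLt; have := hh.isLt
          exact Fin.ext (by omega)
        obtain rfl : c' = hh := by
          have := c'.isLt; have := hh.isLt
          exact Fin.ext (by omega)
        exact ⟨Sum.inl (i', Sum.inr c'), Sum.inl (i', Sum.inl (c', j', 0)),
          (dfA3 i' c' j' 0 (by decide)).symm, rfl, rfl⟩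
      · fin_cases hh
        · obtain ⟨j'', hj''⟩ := βsurj i 1 (β i' c' j')
          exact ⟨Sum.inl (i, Sum.inr 0), Sum.inl (i, Sum.inl (1, j'', 1)),
            (dfA2 i 1 j'').symm, rfl, pm2 _ _ _ _ _ _ hj''⟩
        · obtain ⟨j'', hj''⟩ := βsurj i 0 (β i' c' j')
          exact ⟨Sum.inl (i, Sum.inr 1), Sum.inl (i, Sum.inl (0, j'', 1)),
            (dfA2 i 0 j'').symm, rfl, pm2 _ _ _ _ _ _ hj''⟩
      · obtain rfl : i' = i := by
          have := i.isLt; have := i'.isLt; have := c'.isLt; have := hh.isLt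
          exact Fin.ext (by omega)
        obtain rfl : c' = hh := by
          have := c'.isLt; have := hh.isLt
          exact Fin.ext (by omega)
        exact ⟨Sum.inl (i', Sum.inr c'), Sum.inl (i', Sum.inl (c', j', 2)),
          (dfA3 i' c' j' 2 (by decide)).symm, rfl, rfl⟩
    · -- Hub Hub
      rw [fb2_adj] at h; simp [psiMap] at h
    · -- Hub F
      fin_cases pos' <;> rw [fb2_adj] at h <;> simp [psiMap] at h
      · exfalso; have := i.isLt; have := hh.isLt; omega
      · fin_cases hh
        · obtain ⟨j'', hj''⟩ := βsurj i 1 j'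
          exact ⟨Sum.inl (i, Sum.inr 0), Sum.inl (i, Sum.inl (1, j'', 1)),
            (dfA2 i 1 j'').symm, rfl, (pm3 _ _ _ _).2 hj''⟩
        · obtain ⟨j'', hj''⟩ := βsurj i 0 j'
          exact ⟨Sum.inl (i, Sum.inr 1), Sum.inl (i, Sum.inl (0, j'', 1)),
            (dfA2 i 0 j'').symm, rfl, (pm3 _ _ _ _).2 hj''⟩
      · exfalso; have := i.isLt; have := hh.isLt; omega
    · -- Hub X
      rw [fb2_adj] at h; simp [psiMap] at h
    · -- F E
      fin_cases pos <;> fin_cases pos' <;> rw [fb2_adj] at h <;> simp [psiMap] at h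
      · exact ⟨Sum.inr (Sum.inl (j, 0)), Sum.inr (Sum.inl (j, 1)),
          dfA4 j 0 (Or.inl rfl), rfl,
          by first | exact ((pm3 _ _ _ _).2 h).symm | exact ((pm3 _ _ _ _).2 h.symm).symm⟩
      · exact ⟨Sum.inl (i', Sum.inl (c', j', 1)), Sum.inl (i', Sum.inl (c', j', 0)),
          (dfA1 i' c' j' 0 (Or.inl rfl)).symm,
          by first | exact (pm3 _ _ _ _).2 h | exact (pm3 _ _ _ _).2 h.symm, rfl⟩
      · exact ⟨Sum.inl (i', Sum.inl (c', j', 1)), Sum.inl (i', Sum.inl (c', j', 2)),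
          (dfA1 i' c' j' 2 (Or.inr rfl)).symm,
          by first | exact (pm3 _ _ _ _).2 h | exact (pm3 _ _ _ _).2 h.symm, rfl⟩
      · exact ⟨Sum.inr (Sum.inl (j, 2)), Sum.inr (Sum.inl (j, 1)),
          dfA4 j 2 (Or.inr rfl), rfl,
          by first | exact ((pm3 _ _ _ _).2 h).symm | exact ((pm3 _ _ _ _).2 h.symm).symm⟩
    · -- F Hub
      fin_cases pos <;> rw [fb2_adj] at h <;> simp [psiMap] at h
      · exfalso; have := i'.isLt; have := hh'.isLt; omega
      · fin_cases hh'
        · obtain ⟨j'', hj''⟩ := βsurj i' 1 j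
          exact ⟨Sum.inl (i', Sum.inl (1, j'', 1)), Sum.inl (i', Sum.inr 0),
            dfA2 i' 1 j'', (pm3 _ _ _ _).2 hj'', rfl⟩
        · obtain ⟨j'', hj''⟩ := βsurj i' 0 j
          exact ⟨Sum.inl (i', Sum.inl (0, j'', 1)), Sum.inl (i', Sum.inr 1),
            dfA2 i' 0 j'', (pm3 _ _ _ _).2 hj'', rfl⟩
      · exfalso; have := i'.isLt; have := hh'.isLt; omega
    · -- F F
      fin_cases pos <;> fin_cases pos' <;> rw [fb2_adj] at h <;> simp [psiMap] at h
      · obtain rfl : j = j' := by first | exact h | exact h.symm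
        exact ⟨Sum.inr (Sum.inl (j, 0)), Sum.inr (Sum.inl (j, 1)),
          dfA4 j 0 (Or.inl rfl), rfl, rfl⟩
      · obtain rfl : j = j' := by first | exact h | exact h.symm
        exact ⟨Sum.inr (Sum.inl (j, 1)), Sum.inr (Sum.inl (j, 0)),
          (dfA4 j 0 (Or.inl rfl)).symm, rfl, rfl⟩
      · obtain rfl : j = j' := by first | exact h | exact h.symm
        exact ⟨Sum.inr (Sum.inl (j, 1)), Sum.inr (Sum.inl (j, 2)),
          (dfA4 j 2 (Or.inr rfl)).symm, rfl, rfl⟩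
      · obtain rfl : j = j' := by first | exact h | exact h.symm
        exact ⟨Sum.inr (Sum.inl (j, 2)), Sum.inr (Sum.inl (j, 1)),
          dfA4 j 2 (Or.inr rfl), rfl, rfl⟩
    · -- F X
      exact ⟨Sum.inr (Sum.inl (j, pos)), Sum.inr (Sum.inr w'), dfA5 j pos w', rfl, rfl⟩
    · -- X E
      fin_cases pos' <;> rw [fb2_adj] at h <;> simp [psiMap] at h
      · exfalso; have := i'.isLt; have := c'.isLt; omega
      · exact ⟨Sum.inr (Sum.inr w), Sum.inr (Sum.inl (β i' c' j', 1)),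
          (dfA5 _ 1 w).symm, rfl, (pm1 i' c' j').symm⟩
      · exfalso; have := i'.isLt; have := c'.isLt; omega
    · -- X Hub
      rw [fb2_adj] at h; simp [psiMap] at h
    · -- X F
      exact ⟨Sum.inr (Sum.inr w), Sum.inr (Sum.inl (j', pos')), (dfA5 j' pos' w).symm, rfl, rfl⟩
    · -- X X
      rw [fb2_adj] at h; simp [psiMap] at h
  -- assemble the iso
  set toFun : W → GV (2*r+1) s := fun w => psiMap r s β (Function.surjInv psurj w) with htoFun
  have hto : ∀ v, toFun (p v) = psiMap r s β v :=
    fun v => dir1 _ _ (Function.surjInv_eq psurj (p v))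
  have hinj : Function.Injective toFun := by
    intro w1 w2 h
    have := dir2 _ _ h
    rwa [Function.surjInv_eq psurj, Function.surjInv_eq psurj] at this
  have hsurj : Function.Surjective toFun := by
    intro γ
    obtain ⟨v, hv⟩ := hψsurj γ
    exact ⟨p v, (hto v).trans hv⟩
  refine ⟨⟨Equiv.ofBijective toFun ⟨hinj, hsurj⟩, ?_⟩⟩
  intro a b
  show (FB2 (2*r+1) s).Adj (toFun a) (toFun b) ↔ (mergeMap (DF r s) p).Adj a b
  constructor
  · intro h
    obtain ⟨x', y', hxy, hpx, hpy⟩ := hback _ _ h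
    rw [mergeMap, SimpleGraph.fromRel_adj]
    refine ⟨?_, Or.inl ⟨x', y', hxy, by rw [hpx, Function.surjInv_eq psurj],
      by rw [hpy, Function.surjInv_eq psurj]⟩⟩
    intro hab
    rw [hab] at h
    exact (FB2 (2*r+1) s).loopless.irrefl _ h
  · intro h
    rw [mergeMap, SimpleGraph.fromRel_adj] at h
    obtain ⟨hne, h | h⟩ := h
    · obtain ⟨x, y, hxy, hpx, hpy⟩ := h
      have h1 : toFun a = psiMap r s β x := by
        rw [← hpx, hto]
      have h2 : toFun b = psiMap r s β y := by
        rw [← hpy, hto]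
      rw [h1, h2]
      exact psi_adj x y hxy
    · obtain ⟨x, y, hxy, hpx, hpy⟩ := h
      have h1 : toFun b = psiMap r s β x := by
        rw [← hpx, hto]
      have h2 : toFun a = psiMap r s β y := by
        rw [← hpy, hto]
      rw [h1, h2]
      exact (psi_adj x y hxy).symm

end IsoPart

/-- `DF²(r, 2s)`: merging a suitable partition of the degree-3 vertices of
`DF(r, 2s)` into `s` blocks of size `2r+1` gives a graph with `χ_{la} = 3`. -/
theorem chiLA_DF2merge (r s k : ℕ) (hr : 1 ≤ r) (hsodd : Odd s) (hs : 1 ≤ s)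
    (hk : (2 * r + 1) * s = 2 * k + 1)
    (P : Set (Set (DFVert r s)))
    (hpart : IsPartitionOn (DFdeg3 r s) P)
    (hPcard : P.ncard = s)
    (hBcard : ∀ B ∈ P, B.ncard = 2 * r + 1)
    (hBFB : ∀ B ∈ P, (B ∩ {v | ∃ w, v = Sum.inr w}).ncard = 1)
    (hBDF : ∀ B ∈ P, ∀ i : Fin r, (B ∩ {v | ∃ w, v = Sum.inl (i, w)}).ncard = 2)
    (hnc : ∀ B ∈ P, NoCommon (DF r s) B)
    (W : Type*) (p : DFVert r s → W) (hp : IsMergeOf P p) :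
    chiLA (mergeMap (DF r s) p) = 3 := by
  obtain ⟨iso⟩ := merge_iso r s hr hs P hpart hBFB hnc p hp
  rw [chiLA_eq_of_iso _ _ iso]
  exact chiLA_FB2 (2*r+1) s ⟨r, by ring⟩ (by omega) hsodd hs


end LocalAntimagic
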